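/- arXiv:1906.11719 — 7 statements merged into one kernel-verified Lean document; each statement's English description precedes it below -/
import Mathlib

section
/- Let G be a finite group, N a normal subgroup of G, θ a G-invariant irreducible complex character of N, and P a projective representation of G associated with θ whose factor set takes only root-of-unity values. Then for every g ∈ G the matrix P(g) has finite multiplicative order: there is a positive integer k with P(g)^k equal to the identity matrix. -/
/-- Let `N ⊴ G` be finite groups, `θ` a `G`-invariant irreducible complex
character of `N`, and `P` a projective representation of `G` associated with `θ` whose factor set
takes only root-of-unity values.  Then every matrix `P g` has finite multiplicative order. -/
theorem projectiveRep_associated_matrix_finite_order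
    {G : Type*} [Group G] [Finite G] (N : Subgroup G) (hN : N.Normal)
    (d : ℕ) (hd : 0 < d) (θ : ↥N → ℂ)
    (P : G → Matrix (Fin d) (Fin d) ℂ) (α : G → G → ℂ)
    -- `P` is a projective representation of `G` with factor set `α` :
    (hPinv : ∀ g, IsUnit (P g))
    (hα : ∀ g h, α g h ≠ 0)
    (hfac : ∀ g h, P g * P h = α g h • P (g * h))
    -- `P` is associated with `θ` : its restriction to `N` is a multiplicative irreducible
    -- representation with trace `θ`, and `P (n*g) = P n * P g`, `P (g*n) = P g * P n` :
    (hres : ∀ n m : ↥N, P ((n : G) * (m : G)) = P (n : G) * P (m : G))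
    (hirr : ∀ W : Submodule ℂ (Fin d → ℂ),
      (∀ n : ↥N, ∀ v ∈ W, (P (n : G)).mulVec v ∈ W) → W = ⊥ ∨ W = ⊤)
    (htr : ∀ n : ↥N, (P (n : G)).trace = θ n)
    (hleft : ∀ (n : ↥N) (g : G), P ((n : G) * g) = P (n : G) * P g)
    (hright : ∀ (n : ↥N) (g : G), P (g * (n : G)) = P g * P (n : G))
    -- `θ` is `G`-invariant :
    (hGinv : ∀ (g : G) (n : ↥N), θ ⟨g * (n : G) * g⁻¹, hN.conj_mem (n : G) n.2 g⟩ = θ n)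
    -- the factor set takes only root-of-unity values :
    (hroot : ∀ g h, ∃ k : ℕ, 0 < k ∧ α g h ^ k = 1) :
    ∀ g : G, ∃ k : ℕ, 0 < k ∧ P g ^ k = 1 := by
  have hP1 : P 1 = 1 := by
    have h := hleft (1 : ↥N) 1
    simp only [Subgroup.coe_one, mul_one] at h
    have : P 1 * 1 = P 1 * P 1 := by rw [mul_one]; exact h
    exact ((hPinv 1).mul_left_cancel this).symm
  intro g
  have key : ∀ k : ℕ, ∃ c : ℂ, (∃ K : ℕ, 0 < K ∧ c ^ K = 1) ∧ P g ^ k = c • P (g ^ k) := by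
    intro k
    induction k with
    | zero => exact ⟨1, ⟨1, one_pos, one_pow 1⟩, by simp [hP1]⟩
    | succ k ih =>
      obtain ⟨c, ⟨K, hK, hcK⟩, hc⟩ := ih
      obtain ⟨L, hL, haL⟩ := hroot (g ^ k) g
      refine ⟨c * α (g ^ k) g, ⟨K * L, Nat.mul_pos hK hL, ?_⟩, ?_⟩
      · rw [mul_pow, pow_mul, hcK, one_pow, one_mul, pow_mul', haL, one_pow]
      · rw [pow_succ, hc, smul_mul_assoc, hfac, smul_smul, ← pow_succ]
  obtain ⟨m, hm, hgm⟩ := (isOfFinOrder_of_finite g).exists_pow_eq_one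
  obtain ⟨c, ⟨K, hK, hcK⟩, hc⟩ := key m
  refine ⟨m * K, Nat.mul_pos hm hK, ?_⟩
  rw [pow_mul, hc, hgm, hP1, smul_pow, hcK, one_pow, one_smul]
end

section
/- Let G be a finite group, N a normal subgroup of G, θ an irreducible complex character of N, and P a projective representation of G associated with θ. Suppose μ, μ₁ : G → ℂ∖{0} are constant on cosets of N and satisfy μ(n) = μ₁(n) = 1 for all n ∈ N, and M, M₁ are invertible complex matrices such that μ(g)·M⁻¹·P(g)·M = μ₁(g)·M₁⁻¹·P(g)·M₁ for all g ∈ G. Then μ = μ₁, and moreover M₁ = λ·M for some nonzero complex number λ. -/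
/-- uniqueness of the function `μ`, Remark 1.3 of the paper.
Let `N ⊴ G`, `θ` an irreducible complex character of `N`, `P` a projective representation of `G`
associated with `θ`.  If `μ, μ₁ : G → ℂ∖{0}` are constant on cosets of `N`, take the value `1`
on `N`, and `M, M₁` are invertible matrices with
`μ g • (M⁻¹ * P g * M) = μ₁ g • (M₁⁻¹ * P g * M₁)` for all `g`, then `μ = μ₁` and
`M₁ = λ • M` for some nonzero scalar `λ`. -/
theorem projectiveRep_mu_unique
    {G : Type*} [Group G] [Finite G] (N : Subgroup G) (hN : N.Normal)
    (d : ℕ) (hd : 0 < d) (θ : ↥N → ℂ)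
    (P : G → Matrix (Fin d) (Fin d) ℂ) (α : G → G → ℂ)
    -- `P` is a projective representation of `G` with factor set `α` :
    (hPinv : ∀ g, IsUnit (P g))
    (hα : ∀ g h, α g h ≠ 0)
    (hfac : ∀ g h, P g * P h = α g h • P (g * h))
    -- `P` is associated with `θ` :
    (hres : ∀ n m : ↥N, P ((n : G) * (m : G)) = P (n : G) * P (m : G))
    (hirr : ∀ W : Submodule ℂ (Fin d → ℂ),
      (∀ n : ↥N, ∀ v ∈ W, (P (n : G)).mulVec v ∈ W) → W = ⊥ ∨ W = ⊤)
    (htr : ∀ n : ↥N, (P (n : G)).trace = θ n)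
    (hleft : ∀ (n : ↥N) (g : G), P ((n : G) * g) = P (n : G) * P g)
    (hright : ∀ (n : ↥N) (g : G), P (g * (n : G)) = P g * P (n : G))
    -- the functions `μ` and `μ₁` :
    (μ μ₁ : G → ℂ)
    (hμ0 : ∀ g, μ g ≠ 0) (hμ₁0 : ∀ g, μ₁ g ≠ 0)
    (hμcoset : ∀ (n : ↥N) (g : G), μ ((n : G) * g) = μ g)
    (hμ₁coset : ∀ (n : ↥N) (g : G), μ₁ ((n : G) * g) = μ₁ g)
    (hμN : ∀ n : ↥N, μ (n : G) = 1) (hμ₁N : ∀ n : ↥N, μ₁ (n : G) = 1)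
    (M M₁ : Matrix (Fin d) (Fin d) ℂ)
    (hM : IsUnit M) (hM₁ : IsUnit M₁)
    (heq : ∀ g : G, μ g • (M⁻¹ * P g * M) = μ₁ g • (M₁⁻¹ * P g * M₁)) :
    μ = μ₁ ∧ ∃ lam : ℂ, lam ≠ 0 ∧ M₁ = lam • M := by
  classical
  have hMd : IsUnit M.det := (Matrix.isUnit_iff_isUnit_det M).mp hM
  have hM₁d : IsUnit M₁.det := (Matrix.isUnit_iff_isUnit_det M₁).mp hM₁
  have hMM : M * M⁻¹ = 1 := Matrix.mul_nonsing_inv M hMd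
  have hMM' : M⁻¹ * M = 1 := Matrix.nonsing_inv_mul M hMd
  have hM₁M₁ : M₁ * M₁⁻¹ = 1 := Matrix.mul_nonsing_inv M₁ hM₁d
  have hM₁M₁' : M₁⁻¹ * M₁ = 1 := Matrix.nonsing_inv_mul M₁ hM₁d
  haveI : Nonempty (Fin d) := ⟨⟨0, hd⟩⟩
  set A := M₁ * M⁻¹ with hAdef
  have hAunit : IsUnit A := hM₁.mul ((Matrix.isUnit_nonsing_inv_iff ..).mpr hM)
  -- A commutes with P n for n in N
  have hcomm : ∀ n : ↥N, A * P (n : G) = P (n : G) * A := by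
    intro n
    have h := heq (n : G)
    rw [hμN n, hμ₁N n, one_smul, one_smul] at h
    calc A * P (n : G) = M₁ * (M⁻¹ * P (n : G) * M) * M⁻¹ := by
          simp only [hAdef, Matrix.mul_assoc, hMM, Matrix.mul_one]
      _ = M₁ * (M₁⁻¹ * P (n : G) * M₁) * M⁻¹ := by rw [h]
      _ = (M₁ * M₁⁻¹) * P (n : G) * (M₁ * M⁻¹) := by
          simp only [Matrix.mul_assoc]
      _ = P (n : G) * A := by rw [hM₁M₁, Matrix.one_mul]
  -- Schur: A is scalar
  set f : Module.End ℂ (Fin d → ℂ) := Matrix.mulVecLin A with hf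
  obtain ⟨c, hc⟩ := Module.End.exists_eigenvalue f
  set W := Module.End.eigenspace f c with hW
  have hWinv : ∀ n : ↥N, ∀ v ∈ W, (P (n : G)).mulVec v ∈ W := by
    intro n v hv
    rw [hW, Module.End.mem_eigenspace_iff] at hv ⊢
    have hv' : A.mulVec v = c • v := hv
    show A.mulVec ((P (n : G)).mulVec v) = c • (P (n : G)).mulVec v
    rw [Matrix.mulVec_mulVec, hcomm n, ← Matrix.mulVec_mulVec, hv',
      Matrix.mulVec_smul]
  have hWtop : W = ⊤ := (hirr W hWinv).resolve_left hc
  have hAv : ∀ v : Fin d → ℂ, A.mulVec v = c • v := by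
    intro v
    have : v ∈ W := hWtop ▸ Submodule.mem_top
    rw [hW, Module.End.mem_eigenspace_iff] at this
    exact this
  have hA : A = c • (1 : Matrix (Fin d) (Fin d) ℂ) := by
    apply Matrix.toLin'.injective
    apply LinearMap.ext
    intro v
    simp only [Matrix.toLin'_apply, hAv v, Matrix.smul_mulVec, Matrix.one_mulVec]
  have hc0 : c ≠ 0 := by
    intro h0
    rw [h0, zero_smul] at hA
    rw [hA] at hAunit
    exact (not_isUnit_zero : ¬ IsUnit (0 : Matrix (Fin d) (Fin d) ℂ)) hAunit
  have hM₁eq : M₁ = c • M := by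
    have : A * M = c • M := by rw [hA, Matrix.smul_mul, Matrix.one_mul]
    rw [hAdef, Matrix.mul_assoc, hMM', Matrix.mul_one] at this
    exact this
  have hM₁inv : M₁⁻¹ = c⁻¹ • M⁻¹ := by
    apply Matrix.inv_eq_left_inv
    rw [hM₁eq, Matrix.smul_mul, Matrix.mul_smul, smul_smul, inv_mul_cancel₀ hc0,
      one_smul, hMM']
  have hconj : ∀ g : G, M₁⁻¹ * P g * M₁ = M⁻¹ * P g * M := by
    intro g
    rw [hM₁inv, hM₁eq, Matrix.smul_mul, Matrix.mul_smul, Matrix.smul_mul, smul_smul,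
      mul_inv_cancel₀ hc0, one_smul]
  refine ⟨funext fun g => ?_, c, hc0, hM₁eq⟩
  have h := heq g
  rw [hconj g] at h
  have hXunit : IsUnit (M⁻¹ * P g * M) :=
    (((Matrix.isUnit_nonsing_inv_iff ..).mpr hM).mul (hPinv g)).mul hM
  have hX0 : (M⁻¹ * P g * M) ≠ 0 := hXunit.ne_zero
  have : (μ g - μ₁ g) • (M⁻¹ * P g * M) = 0 := by rw [sub_smul, h, sub_self]
  rcases smul_eq_zero.mp this with h1 | h1
  · exact sub_eq_zero.mp h1
  · exact absurd h1 hX0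
end

section
/- Let G be a finite group, N a normal subgroup of G, θ an irreducible complex character of N, and P a projective representation of G associated with θ. Then for every element c of the centralizer C_G(N) the matrix P(c) is a scalar matrix: P(c) = ζ·I for some nonzero complex number ζ. -/
/-- Let `N ⊴ G`, `θ` an irreducible complex character of `N`, and `P` a
projective representation of `G` associated with `θ`.  Then for every `c` in the centralizer
`C_G(N)` the matrix `P c` is a nonzero scalar multiple of the identity. -/
theorem projectiveRep_scalar_on_centralizer
    {G : Type*} [Group G] [Finite G] (N : Subgroup G) (hN : N.Normal)
    (d : ℕ) (hd : 0 < d) (θ : ↥N → ℂ)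
    (P : G → Matrix (Fin d) (Fin d) ℂ) (α : G → G → ℂ)
    -- `P` is a projective representation of `G` with factor set `α` :
    (hPinv : ∀ g, IsUnit (P g))
    (hα : ∀ g h, α g h ≠ 0)
    (hfac : ∀ g h, P g * P h = α g h • P (g * h))
    -- `P` is associated with `θ` :
    (hres : ∀ n m : ↥N, P ((n : G) * (m : G)) = P (n : G) * P (m : G))
    (hirr : ∀ W : Submodule ℂ (Fin d → ℂ),
      (∀ n : ↥N, ∀ v ∈ W, (P (n : G)).mulVec v ∈ W) → W = ⊥ ∨ W = ⊤)
    (htr : ∀ n : ↥N, (P (n : G)).trace = θ n)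
    (hleft : ∀ (n : ↥N) (g : G), P ((n : G) * g) = P (n : G) * P g)
    (hright : ∀ (n : ↥N) (g : G), P (g * (n : G)) = P g * P (n : G)) :
    ∀ c ∈ Subgroup.centralizer (N : Set G),
      ∃ ζ : ℂ, ζ ≠ 0 ∧ P c = ζ • (1 : Matrix (Fin d) (Fin d) ℂ) := by
  intro c hc
  -- P c commutes with every P n, n ∈ N
  have hcomm : ∀ n : ↥N, P (n : G) * P c = P c * P (n : G) := by
    intro n
    have h1 : (n : G) * c = c * (n : G) := hc n n.2
    calc P (n : G) * P c = P ((n : G) * c) := (hleft n c).symm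
      _ = P (c * (n : G)) := by rw [h1]
      _ = P c * P (n : G) := hright n c
  -- eigenvalue of P c
  haveI : Nontrivial (Fin d → ℂ) := by
    have : Nonempty (Fin d) := ⟨⟨0, hd⟩⟩
    infer_instance
  obtain ⟨ζ, hζ⟩ := Module.End.exists_eigenvalue ((P c).mulVecLin)
  have hW : Module.End.eigenspace ((P c).mulVecLin) ζ ≠ ⊥ := hζ
  -- the eigenspace is invariant under all P n
  have hinv : ∀ n : ↥N, ∀ v ∈ Module.End.eigenspace ((P c).mulVecLin) ζ,
      (P (n : G)).mulVec v ∈ Module.End.eigenspace ((P c).mulVecLin) ζ := by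
    intro n v hv
    rw [Module.End.mem_eigenspace_iff] at hv ⊢
    have hv' : (P c).mulVec v = ζ • v := hv
    show (P c).mulVec ((P (n : G)).mulVec v) = ζ • (P (n : G)).mulVec v
    rw [Matrix.mulVec_mulVec, ← hcomm n, ← Matrix.mulVec_mulVec, hv',
      Matrix.mulVec_smul]
  rcases hirr _ hinv with hbot | htop
  · exact absurd hbot hW
  · have heig : ∀ v : Fin d → ℂ, (P c).mulVec v = ζ • v := by
      intro v
      have : v ∈ Module.End.eigenspace ((P c).mulVecLin) ζ := htop ▸ Submodule.mem_top
      exact Module.End.mem_eigenspace_iff.mp this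
    have hPc : P c = ζ • (1 : Matrix (Fin d) (Fin d) ℂ) := by
      apply Matrix.ext
      intro i j
      have := congrFun (heig (Pi.single j 1)) i
      simpa [Matrix.mulVec_single, Matrix.one_apply, Pi.single_apply] using this
    refine ⟨ζ, ?_, hPc⟩
    intro h0
    have : P c = 0 := by rw [hPc, h0, zero_smul]
    have hu := hPinv c
    rw [this] at hu
    haveI : Nonempty (Fin d) := ⟨⟨0, hd⟩⟩
    exact (not_isUnit_zero : ¬ IsUnit (0 : Matrix (Fin d) (Fin d) ℂ)) hu
end

section
/- Let G be a finite group, N a normal subgroup of G, and θ an irreducible complex character of N with stabilizer G_θ. Let g ∈ G and let σ be a ring automorphism of ℂ such that θ^{gσ} = θ. Let P be a projective representation of G_θ associated with θ, with factor set α. Then: (i) conjugation by g maps G_θ onto itself; (ii) the map P^{gσ} defined on G_θ by P^{gσ}(x) = σ(P(g·x·g⁻¹)) (σ applied entrywise) is a projective representation of G_θ associated with θ, with factor set (x,y) ↦ σ(α(g·x·g⁻¹, g·y·g⁻¹)); (iii) there exists a unique function μ : G_θ → ℂ∖{0} with μ(1) = 1 and μ constant on cosets of N such that for some invertible complex matrix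 M one has P^{gσ}(x) = μ(x)·M⁻¹·P(x)·M for all x ∈ G_θ. -/
open Matrix

lemma mat_ext_mulVec {d : ℕ} {A B : Matrix (Fin d) (Fin d) ℂ}
    (h : ∀ v, A.mulVec v = B.mulVec v) : A = B := by
  ext i j
  have := congrFun (h (Pi.single j 1)) i
  simpa [Matrix.mulVec_single] using this

lemma schur_scalar {d : ℕ} (hd : 0 < d) {ι : Type*} (P : ι → Matrix (Fin d) (Fin d) ℂ)
    (hirr : ∀ W : Submodule ℂ (Fin d → ℂ),
      (∀ i, ∀ v ∈ W, (P i).mulVec v ∈ W) → W = ⊥ ∨ W = ⊤)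
    (T : Matrix (Fin d) (Fin d) ℂ) (hT : ∀ i, P i * T = T * P i) :
    ∃ c : ℂ, T = c • 1 := by
  haveI : Nontrivial (Fin d → ℂ) := by
    have : Nonempty (Fin d) := ⟨⟨0, hd⟩⟩
    infer_instance
  obtain ⟨c, hc⟩ := Module.End.exists_eigenvalue (T.mulVecLin)
  refine ⟨c, ?_⟩
  have hinv : ∀ i, ∀ v ∈ Module.End.eigenspace T.mulVecLin c,
      (P i).mulVec v ∈ Module.End.eigenspace T.mulVecLin c := by
    intro i v hv
    rw [Module.End.mem_eigenspace_iff] at hv ⊢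
    have h1 : T.mulVecLin ((P i).mulVec v) = (T * P i).mulVec v := by
      simp [Matrix.mulVecLin_apply, Matrix.mulVec_mulVec]
    rw [h1, ← hT i]
    have h2 : (P i * T).mulVec v = (P i).mulVec (T.mulVec v) := by
      simp [Matrix.mulVec_mulVec]
    have h3 : T.mulVec v = c • v := by
      simpa [Matrix.mulVecLin_apply] using hv
    rw [h2, h3, Matrix.mulVec_smul]
  have hW : (Module.End.eigenspace T.mulVecLin c) = ⊤ := by
    rcases hirr _ hinv with hbot | htop
    · exact absurd hbot hc
    · exact htop
  apply mat_ext_mulVec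
  intro v
  have hv : v ∈ Module.End.eigenspace T.mulVecLin c := hW ▸ Submodule.mem_top
  rw [Module.End.mem_eigenspace_iff] at hv
  simp only [Matrix.mulVecLin_apply] at hv
  rw [hv, Matrix.smul_mulVec, Matrix.one_mulVec]

lemma unit_of_injective {d : ℕ} {T : Matrix (Fin d) (Fin d) ℂ}
    (h : LinearMap.ker T.mulVecLin = ⊥) : IsUnit T := by
  have h1 : IsUnit (Matrix.toLinAlgEquiv' T) := by
    rw [LinearMap.isUnit_iff_ker_eq_bot]
    have : (Matrix.toLinAlgEquiv' T : (Fin d → ℂ) →ₗ[ℂ] (Fin d → ℂ)) = T.mulVecLin := rfl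
    rw [this]; exact h
  have h2 := h1.map (Matrix.toLinAlgEquiv' (n := Fin d) (R := ℂ)).symm.toRingEquiv.toMonoidHom
  simpa using h2

lemma intertwiner_zero_or_unit {d : ℕ} {ι : Type*} (P Q : ι → Matrix (Fin d) (Fin d) ℂ)
    (hQirr : ∀ W : Submodule ℂ (Fin d → ℂ),
      (∀ i, ∀ v ∈ W, (Q i).mulVec v ∈ W) → W = ⊥ ∨ W = ⊤)
    (T : Matrix (Fin d) (Fin d) ℂ) (hT : ∀ i, P i * T = T * Q i) :
    T = 0 ∨ IsUnit T := by
  have hinv : ∀ i, ∀ v ∈ LinearMap.ker T.mulVecLin,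
      (Q i).mulVec v ∈ LinearMap.ker T.mulVecLin := by
    intro i v hv
    rw [LinearMap.mem_ker] at hv ⊢
    simp only [Matrix.mulVecLin_apply] at hv ⊢
    rw [Matrix.mulVec_mulVec, ← hT i, ← Matrix.mulVec_mulVec, hv, Matrix.mulVec_zero]
  rcases hQirr _ hinv with hbot | htop
  · exact Or.inr (unit_of_injective hbot)
  · left
    apply mat_ext_mulVec
    intro v
    have : v ∈ LinearMap.ker T.mulVecLin := htop ▸ Submodule.mem_top
    rw [LinearMap.mem_ker] at this
    simpa [Matrix.mulVecLin_apply] using this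

lemma mul_std_mul {d : ℕ} (A B : Matrix (Fin d) (Fin d) ℂ) (i j k l : Fin d) :
    (A * Matrix.single i j (1:ℂ) * B) k l = A k i * B j l := by
  rw [Matrix.mul_assoc, Matrix.mul_apply]
  have : ∀ p, (Matrix.single i j (1:ℂ) * B) p l = if p = i then B j l else 0 := by
    intro p
    by_cases hp : p = i
    · subst hp; rw [Matrix.single_mul_apply_same]; simp
    · rw [Matrix.single_mul_apply_of_ne 1 i j p l hp]; simp [hp]
  simp only [this, mul_ite, mul_zero]
  simp

lemma avg_intertwine {d : ℕ} {H : Type*} [Group H] [Fintype H]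
    (P Q : H → Matrix (Fin d) (Fin d) ℂ)
    (hPm : ∀ a b, P (a * b) = P a * P b)
    (hQm : ∀ a b, Q (a * b) = Q a * Q b)
    (X : Matrix (Fin d) (Fin d) ℂ) (m : H) :
    P m * (∑ n : H, P n * X * Q n⁻¹) = (∑ n : H, P n * X * Q n⁻¹) * Q m := by
  rw [Finset.mul_sum, Finset.sum_mul]
  refine Fintype.sum_equiv (Equiv.mulLeft m) _ _ (fun n => ?_)
  simp only [Equiv.coe_mulLeft]
  have h1 : P m * (P n * X * Q n⁻¹) = P (m * n) * X * Q n⁻¹ := by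
    rw [hPm]; noncomm_ring
  have h2 : P (m * n) * X * Q (m * n)⁻¹ * Q m = P (m * n) * X * Q n⁻¹ := by
    rw [Matrix.mul_assoc, ← hQm]
    congr 1
    group
  rw [h1, h2]

lemma equiv_of_eq_trace {d : ℕ} (hd : 0 < d) {H : Type*} [Group H] [Finite H]
    (P Q : H → Matrix (Fin d) (Fin d) ℂ)
    (hP1 : P 1 = 1) (hPm : ∀ a b, P (a * b) = P a * P b)
    (hQm : ∀ a b, Q (a * b) = Q a * Q b)
    (hPirr : ∀ W : Submodule ℂ (Fin d → ℂ),
      (∀ a, ∀ v ∈ W, (P a).mulVec v ∈ W) → W = ⊥ ∨ W = ⊤)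
    (hQirr : ∀ W : Submodule ℂ (Fin d → ℂ),
      (∀ a, ∀ v ∈ W, (Q a).mulVec v ∈ W) → W = ⊥ ∨ W = ⊤)
    (htr : ∀ a, (P a).trace = (Q a).trace) :
    ∃ M : Matrix (Fin d) (Fin d) ℂ, IsUnit M ∧ ∀ a, Q a = M⁻¹ * P a * M := by
  haveI := Fintype.ofFinite H
  -- the averaging operators
  set f : Matrix (Fin d) (Fin d) ℂ → Matrix (Fin d) (Fin d) ℂ :=
    fun X => ∑ n : H, P n * X * Q n⁻¹ with hf
  set fP : Matrix (Fin d) (Fin d) ℂ → Matrix (Fin d) (Fin d) ℂ :=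
    fun X => ∑ n : H, P n * X * P n⁻¹ with hfP
  -- each f X is 0 or a unit
  have hfzu : ∀ X, f X = 0 ∨ IsUnit (f X) := fun X =>
    intertwiner_zero_or_unit P Q hQirr (f X) (avg_intertwine P Q hPm hQm X)
  -- suppose all f (E i j) = 0 : derive a contradiction
  by_cases hex : ∃ i j, IsUnit (f (Matrix.single i j (1:ℂ)))
  · obtain ⟨i, j, hU⟩ := hex
    set T := f (Matrix.single i j (1:ℂ)) with hT
    refine ⟨T, hU, fun a => ?_⟩
    have hint : P a * T = T * Q a := avg_intertwine P Q hPm hQm _ a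
    have hdet : IsUnit T.det := (Matrix.isUnit_iff_isUnit_det T).mp hU
    calc Q a = T⁻¹ * T * Q a := by rw [Matrix.nonsing_inv_mul T hdet, Matrix.one_mul]
    _ = T⁻¹ * (P a * T) := by rw [Matrix.mul_assoc, hint]
    _ = T⁻¹ * P a * T := by rw [Matrix.mul_assoc]
  · exfalso
    push_neg at hex
    have hzero : ∀ i j, f (Matrix.single i j (1:ℂ)) = 0 := by
      intro i j
      rcases hfzu (Matrix.single i j (1:ℂ)) with h | h
      · exact h
      · exact absurd h (hex i j)
    -- entrywise consequence
    have hzero' : ∀ i j : Fin d, ∑ n : H, P n i i * Q n⁻¹ j j = 0 := by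
      intro i j
      have := congrFun (congrFun (hzero i j) i) j
      simp only [hf] at this
      rw [Matrix.sum_apply] at this
      simpa [mul_std_mul] using this
    have htr' : ∀ (M : Matrix (Fin d) (Fin d) ℂ), M.trace = ∑ i, M i i := fun M => rfl
    -- hence ∑ tr(P n) tr(Q n⁻¹) = 0
    have hsum0 : ∑ n : H, (P n).trace * ((Q n⁻¹).trace) = 0 := by
      have he : ∀ n : H, (P n).trace * (Q n⁻¹).trace
          = ∑ i : Fin d, ∑ j : Fin d, P n i i * Q n⁻¹ j j := by
        intro n
        rw [htr', htr', Finset.sum_mul_sum]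
      rw [Finset.sum_congr rfl (fun n _ => he n), Finset.sum_comm]
      refine Finset.sum_eq_zero (fun i _ => ?_)
      rw [Finset.sum_comm]
      exact Finset.sum_eq_zero (fun j _ => hzero' i j)
    -- on the other hand this sum equals |H| ≠ 0
    have hPinvmul : ∀ n : H, P n⁻¹ * P n = 1 := by
      intro n; rw [← hPm, inv_mul_cancel, hP1]
    -- fP of diagonal std basis matrices
    have hscal : ∀ i j : Fin d, ∃ c : ℂ, fP (Matrix.single i j (1:ℂ)) = c • 1 :=
      fun i j => schur_scalar hd P hPirr _
        (fun m => avg_intertwine P P hPm hPm (Matrix.single i j (1:ℂ)) m)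
    have hdiag : ∀ i : Fin d, ∑ n : H, P n i i * P n⁻¹ i i
        = (Fintype.card H : ℂ) / (d : ℂ) := by
      intro i
      obtain ⟨c, hc⟩ := hscal i i
      have htrc : (fP (Matrix.single i i (1:ℂ))).trace = (Fintype.card H : ℂ) := by
        simp only [hfP]
        rw [Matrix.trace_sum]
        have : ∀ n : H, (P n * Matrix.single i i (1:ℂ) * P n⁻¹).trace = 1 := by
          intro n
          rw [Matrix.trace_mul_cycle, hPinvmul, Matrix.one_mul]
          simp [htr', Matrix.single, Matrix.diag]
        simp [this]
      rw [hc] at htrc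
      rw [Matrix.trace_smul, Matrix.trace_one] at htrc
      have hd0 : (d : ℂ) ≠ 0 := Nat.cast_ne_zero.mpr hd.ne'
      have hcval : c = (Fintype.card H : ℂ) / (d : ℂ) := by
        rw [eq_div_iff hd0]
        simpa [mul_comm] using htrc
      have hentry := congrFun (congrFun hc i) i
      simp only [hfP] at hentry
      rw [Matrix.sum_apply] at hentry
      simp only [mul_std_mul] at hentry
      rw [hentry]
      simp [Matrix.one_apply, hcval]
    have hoff : ∀ i j : Fin d, i ≠ j → ∑ n : H, P n i i * P n⁻¹ j j = 0 := by
      intro i j hij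
      obtain ⟨c, hc⟩ := hscal i j
      have hentry := congrFun (congrFun hc i) j
      simp only [hfP] at hentry
      rw [Matrix.sum_apply] at hentry
      simp only [mul_std_mul] at hentry
      rw [hentry]
      simp [Matrix.one_apply, hij]
    -- compute the sum with Q replaced by P via equal traces
    have hsum1 : ∑ n : H, (P n).trace * ((Q n⁻¹).trace) = (Fintype.card H : ℂ) := by
      have he : ∀ n : H, (P n).trace * (Q n⁻¹).trace
          = ∑ i : Fin d, ∑ j : Fin d, P n i i * P n⁻¹ j j := by
        intro n
        rw [← htr n⁻¹, htr', htr', Finset.sum_mul_sum]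
      rw [Finset.sum_congr rfl (fun n _ => he n), Finset.sum_comm]
      have : ∀ i : Fin d, (∑ n : H, ∑ j : Fin d, P n i i * P n⁻¹ j j)
          = (Fintype.card H : ℂ) / (d : ℂ) := by
        intro i
        rw [Finset.sum_comm]
        rw [Finset.sum_eq_single i]
        · exact hdiag i
        · intro j _ hji
          exact hoff i j (Ne.symm hji)
        · intro hi; exact absurd (Finset.mem_univ i) hi
      rw [Finset.sum_congr rfl (fun i _ => this i)]
      rw [Finset.sum_const, Finset.card_univ, Fintype.card_fin, nsmul_eq_mul]
      have hd0 : (d : ℂ) ≠ 0 := Nat.cast_ne_zero.mpr hd.ne'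
      field_simp
    rw [hsum0] at hsum1
    have : (Fintype.card H : ℂ) ≠ 0 := Nat.cast_ne_zero.mpr Fintype.card_ne_zero
    exact this hsum1.symm

lemma smul_one_inj {d : ℕ} (hd : 0 < d) {c c' : ℂ}
    (h : c • (1 : Matrix (Fin d) (Fin d) ℂ) = c' • 1) : c = c' := by
  have := congrFun (congrFun h ⟨0, hd⟩) ⟨0, hd⟩
  simpa [Matrix.one_apply] using this

lemma smul_cancel_unit {d : ℕ} (hd : 0 < d) {A : Matrix (Fin d) (Fin d) ℂ} {a b : ℂ}
    (hA : IsUnit A) (h : a • A = b • A) : a = b := by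
  have hdet : IsUnit A.det := (Matrix.isUnit_iff_isUnit_det A).mp hA
  have h2 : a • (A * A⁻¹) = b • (A * A⁻¹) := by
    rw [← Matrix.smul_mul, ← Matrix.smul_mul, h]
  rw [Matrix.mul_nonsing_inv A hdet] at h2
  exact smul_one_inj hd h2

lemma matmap_mul {d : ℕ} (σ : ℂ ≃+* ℂ) (A B : Matrix (Fin d) (Fin d) ℂ) :
    (A * B).map ⇑σ = A.map ⇑σ * B.map ⇑σ := by
  ext i j
  simp [Matrix.mul_apply, Matrix.map_apply, map_sum]

lemma matmap_smul {d : ℕ} (σ : ℂ ≃+* ℂ) (c : ℂ) (A : Matrix (Fin d) (Fin d) ℂ) :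
    (c • A).map ⇑σ = σ c • A.map ⇑σ := by
  ext i j
  simp [Matrix.map_apply]

lemma matmap_one {d : ℕ} (σ : ℂ ≃+* ℂ) :
    (1 : Matrix (Fin d) (Fin d) ℂ).map ⇑σ = 1 := by
  ext i j
  by_cases h : i = j <;> simp [Matrix.map_apply, Matrix.one_apply, h]

lemma matmap_trace {d : ℕ} (σ : ℂ ≃+* ℂ) (A : Matrix (Fin d) (Fin d) ℂ) :
    (A.map ⇑σ).trace = σ A.trace := by
  simp [Matrix.trace, Matrix.diag, Matrix.map_apply, map_sum]

lemma matmap_isUnit {d : ℕ} (σ : ℂ ≃+* ℂ) {A : Matrix (Fin d) (Fin d) ℂ}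
    (hA : IsUnit A) : IsUnit (A.map ⇑σ) := by
  have := hA.map (RingHom.mapMatrix (σ : ℂ →+* ℂ) (m := Fin d))
  simpa [RingHom.mapMatrix_apply] using this

lemma matmap_mulVec {d : ℕ} (σ : ℂ ≃+* ℂ) (A : Matrix (Fin d) (Fin d) ℂ) (v : Fin d → ℂ) :
    (A.map ⇑σ).mulVec (fun i => σ (v i)) = fun i => σ (A.mulVec v i) := by
  funext i
  simp [Matrix.mulVec, dotProduct, Matrix.map_apply, map_sum]

/-- The stabilizer `G_θ` of a character `θ` of a normal subgroup `N` of `G`, as a set: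
the set of `x ∈ G` with `θ(x n x⁻¹) = θ n` for all `n ∈ N`. -/
def charStabSet {G : Type*} [Group G] (N : Subgroup G) (hN : N.Normal) (θ : ↥N → ℂ) : Set G :=
  {x : G | ∀ n : ↥N, θ ⟨x * (n : G) * x⁻¹, hN.conj_mem (n : G) n.2 x⟩ = θ n}

/-- Lemma 1.4 of the paper.  Let `N ⊴ G`, `θ` an irreducible complex character
of `N` with stabilizer `G_θ`, `g ∈ G`, and `σ` a ring automorphism of `ℂ` with `θ^{gσ} = θ`.
Let `P` be a projective representation of `G_θ` associated with `θ`, with factor set `α`.  Then: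
(i) conjugation by `g` maps `G_θ` onto itself; (ii) `P^{gσ} : x ↦ σ(P(g x g⁻¹))` is a projective
representation of `G_θ` associated with `θ`, with factor set `(x, y) ↦ σ(α(g x g⁻¹, g y g⁻¹))`;
(iii) there is a unique function `μ : G_θ → ℂ∖{0}` with `μ 1 = 1`, constant on cosets of `N`,
such that `P^{gσ} = μ • (M⁻¹ * P * M)` for some invertible matrix `M`. -/
theorem projectiveRep_conj_galois_twist
    {G : Type*} [Group G] [Finite G] (N : Subgroup G) (hN : N.Normal)
    (d : ℕ) (hd : 0 < d) (θ : ↥N → ℂ)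
    -- `θ` is an irreducible character of `N`, afforded by the representation `ρ` :
    (ρ : ↥N → Matrix (Fin d) (Fin d) ℂ)
    (hρ1 : ρ 1 = 1) (hρmul : ∀ n m : ↥N, ρ (n * m) = ρ n * ρ m)
    (hρirr : ∀ W : Submodule ℂ (Fin d → ℂ),
      (∀ n : ↥N, ∀ v ∈ W, (ρ n).mulVec v ∈ W) → W = ⊥ ∨ W = ⊤)
    (hρtr : ∀ n : ↥N, (ρ n).trace = θ n)
    -- the stabilizer `G_θ` :
    (S : Set G) (hS : S = charStabSet N hN θ)
    -- `g ∈ G` and the ring automorphism `σ` of `ℂ` satisfy `θ^{gσ} = θ` :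
    (g : G) (σ : ℂ ≃+* ℂ)
    (hgσ : ∀ n : ↥N, σ (θ ⟨g * (n : G) * g⁻¹, hN.conj_mem (n : G) n.2 g⟩) = θ n)
    -- `P` is a projective representation of `G_θ` with factor set `α`, associated with `θ` :
    (P : G → Matrix (Fin d) (Fin d) ℂ) (α : G → G → ℂ)
    (hPinv : ∀ x ∈ S, IsUnit (P x))
    (hα : ∀ x ∈ S, ∀ y ∈ S, α x y ≠ 0)
    (hfac : ∀ x ∈ S, ∀ y ∈ S, P x * P y = α x y • P (x * y))
    (hres : ∀ n m : ↥N, P ((n : G) * (m : G)) = P (n : G) * P (m : G))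
    (hirr : ∀ W : Submodule ℂ (Fin d → ℂ),
      (∀ n : ↥N, ∀ v ∈ W, (P (n : G)).mulVec v ∈ W) → W = ⊥ ∨ W = ⊤)
    (htr : ∀ n : ↥N, (P (n : G)).trace = θ n)
    (hleft : ∀ (n : ↥N), ∀ x ∈ S, P ((n : G) * x) = P (n : G) * P x)
    (hright : ∀ (n : ↥N), ∀ x ∈ S, P (x * (n : G)) = P x * P (n : G)) :
    -- (i) conjugation by `g` maps `G_θ` onto itself :
    (∀ x : G, x ∈ S ↔ g * x * g⁻¹ ∈ S) ∧
    -- (ii) `P^{gσ} : x ↦ σ(P (g x g⁻¹))` is a projective representation of `G_θ` with factor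
    -- set `(x, y) ↦ σ (α (g x g⁻¹) (g y g⁻¹))`, associated with `θ` :
    ((∀ x ∈ S, IsUnit ((P (g * x * g⁻¹)).map ⇑σ)) ∧
     (∀ x ∈ S, ∀ y ∈ S,
        (P (g * x * g⁻¹)).map ⇑σ * (P (g * y * g⁻¹)).map ⇑σ =
          σ (α (g * x * g⁻¹) (g * y * g⁻¹)) • (P (g * (x * y) * g⁻¹)).map ⇑σ) ∧
     (∀ n m : ↥N,
        (P (g * ((n : G) * (m : G)) * g⁻¹)).map ⇑σ =
          (P (g * (n : G) * g⁻¹)).map ⇑σ * (P (g * (m : G) * g⁻¹)).map ⇑σ) ∧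
     (∀ W : Submodule ℂ (Fin d → ℂ),
        (∀ n : ↥N, ∀ v ∈ W, ((P (g * (n : G) * g⁻¹)).map ⇑σ).mulVec v ∈ W) →
          W = ⊥ ∨ W = ⊤) ∧
     (∀ n : ↥N, ((P (g * (n : G) * g⁻¹)).map ⇑σ).trace = θ n) ∧
     (∀ (n : ↥N), ∀ x ∈ S,
        (P (g * ((n : G) * x) * g⁻¹)).map ⇑σ =
          (P (g * (n : G) * g⁻¹)).map ⇑σ * (P (g * x * g⁻¹)).map ⇑σ ∧
        (P (g * (x * (n : G)) * g⁻¹)).map ⇑σ =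
          (P (g * x * g⁻¹)).map ⇑σ * (P (g * (n : G) * g⁻¹)).map ⇑σ)) ∧
    -- (iii) existence and uniqueness of `μ` :
    (∃ μ : G → ℂ,
      (∀ x ∈ S, μ x ≠ 0) ∧ μ 1 = 1 ∧
      (∀ (n : ↥N), ∀ x ∈ S, μ ((n : G) * x) = μ x) ∧
      (∃ M : Matrix (Fin d) (Fin d) ℂ, IsUnit M ∧
        ∀ x ∈ S, (P (g * x * g⁻¹)).map ⇑σ = μ x • (M⁻¹ * P x * M)) ∧
      (∀ μ' : G → ℂ, μ' 1 = 1 →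
        (∀ (n : ↥N), ∀ x ∈ S, μ' ((n : G) * x) = μ' x) →
        (∃ M' : Matrix (Fin d) (Fin d) ℂ, IsUnit M' ∧
          ∀ x ∈ S, (P (g * x * g⁻¹)).map ⇑σ = μ' x • (M'⁻¹ * P x * M')) →
        ∀ x ∈ S, μ' x = μ x)) := by
  classical
  -- convenient membership characterizations
  have hmem' : ∀ x : G, x ∈ S ↔
      ∀ (n e : ↥N), (e : G) = x * (n : G) * x⁻¹ → θ e = θ n := by
    intro x
    rw [hS]
    constructor
    · intro hx n e he
      have he2 : e = ⟨x * (n : G) * x⁻¹, hN.conj_mem (n : G) n.2 x⟩ := Subtype.ext he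
      rw [he2]
      exact hx n
    · intro h n
      exact h n _ rfl
  have hgσ' : ∀ (n e : ↥N), (e : G) = g * (n : G) * g⁻¹ → σ (θ e) = θ n := by
    intro n e he
    have he2 : e = ⟨g * (n : G) * g⁻¹, hN.conj_mem (n : G) n.2 g⟩ := Subtype.ext he
    rw [he2]
    exact hgσ n
  -- part (i)
  have hi : ∀ x : G, x ∈ S ↔ g * x * g⁻¹ ∈ S := by
    intro x
    constructor
    · intro hx
      rw [hmem']
      intro n e he
      have hmN : (g⁻¹ * (n : G) * g) ∈ N := by
        simpa using hN.conj_mem (n : G) n.2 g⁻¹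
      have hcN : (x * (g⁻¹ * (n : G) * g) * x⁻¹) ∈ N := hN.conj_mem _ hmN x
      have he' : (e : G) = g * (x * (g⁻¹ * (n : G) * g) * x⁻¹) * g⁻¹ := by
        rw [he]; group
      have h1 : σ (θ e) = θ (⟨x * (g⁻¹ * (n : G) * g) * x⁻¹, hcN⟩ : ↥N) :=
        hgσ' _ e he'
      have h2 : θ (⟨x * (g⁻¹ * (n : G) * g) * x⁻¹, hcN⟩ : ↥N)
          = θ (⟨g⁻¹ * (n : G) * g, hmN⟩ : ↥N) :=
        (hmem' x).mp hx _ _ rfl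
      have h3 : σ (θ n) = θ (⟨g⁻¹ * (n : G) * g, hmN⟩ : ↥N) := by
        refine hgσ' _ n ?_
        show (n : G) = g * (g⁻¹ * (n : G) * g) * g⁻¹
        group
      exact σ.injective (by rw [h1, h2, ← h3])
    · intro hgx
      rw [hmem']
      intro n e he
      have hn'N : (g * (n : G) * g⁻¹) ∈ N := hN.conj_mem _ n.2 g
      have he'N : ((g * x * g⁻¹) * (g * (n : G) * g⁻¹) * (g * x * g⁻¹)⁻¹) ∈ N :=
        hN.conj_mem _ hn'N _
      have h1 : θ (⟨(g * x * g⁻¹) * (g * (n : G) * g⁻¹) * (g * x * g⁻¹)⁻¹, he'N⟩ : ↥N)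
          = θ (⟨g * (n : G) * g⁻¹, hn'N⟩ : ↥N) :=
        (hmem' _).mp hgx _ _ rfl
      have h2 : σ (θ (⟨(g * x * g⁻¹) * (g * (n : G) * g⁻¹) * (g * x * g⁻¹)⁻¹, he'N⟩ : ↥N))
          = θ e := by
        refine hgσ' e _ ?_
        show (g * x * g⁻¹) * (g * (n : G) * g⁻¹) * (g * x * g⁻¹)⁻¹ = g * (e : G) * g⁻¹
        rw [he]; group
      have h3 : σ (θ (⟨g * (n : G) * g⁻¹, hn'N⟩ : ↥N)) = θ n := hgσ' n _ rfl
      rw [← h2, h1, h3]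
  -- part (ii)
  have hii1 : ∀ x ∈ S, IsUnit ((P (g * x * g⁻¹)).map ⇑σ) :=
    fun x hx => matmap_isUnit σ (hPinv _ ((hi x).mp hx))
  have hii2 : ∀ x ∈ S, ∀ y ∈ S,
      (P (g * x * g⁻¹)).map ⇑σ * (P (g * y * g⁻¹)).map ⇑σ =
        σ (α (g * x * g⁻¹) (g * y * g⁻¹)) • (P (g * (x * y) * g⁻¹)).map ⇑σ := by
    intro x hx y hy
    have h := hfac _ ((hi x).mp hx) _ ((hi y).mp hy)
    rw [show (g * x * g⁻¹) * (g * y * g⁻¹) = g * (x * y) * g⁻¹ by group] at h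
    rw [← matmap_mul, h, matmap_smul]
  have hii3 : ∀ n m : ↥N,
      (P (g * ((n : G) * (m : G)) * g⁻¹)).map ⇑σ =
        (P (g * (n : G) * g⁻¹)).map ⇑σ * (P (g * (m : G) * g⁻¹)).map ⇑σ := by
    intro n m
    have h := hres ⟨g * (n : G) * g⁻¹, hN.conj_mem _ n.2 g⟩ ⟨g * (m : G) * g⁻¹, hN.conj_mem _ m.2 g⟩
    rw [show g * ((n : G) * (m : G)) * g⁻¹ = (g * (n : G) * g⁻¹) * (g * (m : G) * g⁻¹) by group,
      h, matmap_mul]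
  have hii4 : ∀ W : Submodule ℂ (Fin d → ℂ),
      (∀ n : ↥N, ∀ v ∈ W, ((P (g * (n : G) * g⁻¹)).map ⇑σ).mulVec v ∈ W) →
        W = ⊥ ∨ W = ⊤ := by
    intro W hW
    set W₂ : Submodule ℂ (Fin d → ℂ) :=
      { carrier := {v | (fun i => σ (v i)) ∈ W}
        add_mem' := by
          intro a b ha hb
          simp only [Set.mem_setOf_eq] at ha hb ⊢
          have : (fun i => σ ((a + b) i)) = (fun i => σ (a i)) + (fun i => σ (b i)) := by
            funext i; simp
          rw [this]; exact W.add_mem ha hb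
        zero_mem' := by
          simp only [Set.mem_setOf_eq]
          have : (fun i => σ ((0 : Fin d → ℂ) i)) = (0 : Fin d → ℂ) := by funext i; simp
          rw [this]; exact W.zero_mem
        smul_mem' := by
          intro c v hv
          simp only [Set.mem_setOf_eq] at hv ⊢
          have : (fun i => σ ((c • v) i)) = σ c • (fun i => σ (v i)) := by
            funext i; simp
          rw [this]; exact W.smul_mem _ hv } with hW₂def
    have hmemW₂ : ∀ v : Fin d → ℂ, v ∈ W₂ ↔ (fun i => σ (v i)) ∈ W := fun v => Iff.rfl
    have hW₂inv : ∀ m : ↥N, ∀ v ∈ W₂, (P (m : G)).mulVec v ∈ W₂ := by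
      intro m v hv
      rw [hmemW₂] at hv ⊢
      have hg : g * (g⁻¹ * (m : G) * g) * g⁻¹ = (m : G) := by group
      have h1 := hW ⟨g⁻¹ * (m : G) * g, by simpa using hN.conj_mem (m : G) m.2 g⁻¹⟩ _ hv
      rw [show ((⟨g⁻¹ * (m : G) * g, by simpa using hN.conj_mem (m : G) m.2 g⁻¹⟩ : ↥N) : G)
        = g⁻¹ * (m : G) * g from rfl, hg] at h1
      rw [show (fun i => σ ((P (m : G)).mulVec v i)) =
        ((P (m : G)).map ⇑σ).mulVec (fun i => σ (v i)) from (matmap_mulVec σ _ v).symm]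
      exact h1
    rcases hirr W₂ hW₂inv with hbot | htop
    · left
      rw [Submodule.eq_bot_iff] at hbot ⊢
      intro v hv
      have hv2 : (fun i => σ.symm (v i)) ∈ W₂ := by
        rw [hmemW₂]
        have : (fun i => σ (σ.symm (v i))) = v := by funext i; simp
        rw [this]; exact hv
      have h0 := hbot _ hv2
      funext i
      have := congrFun h0 i
      simpa using this
    · right
      rw [Submodule.eq_top_iff'] at htop ⊢
      intro v
      have hv2 := (hmemW₂ (fun i => σ.symm (v i))).mp (htop _)
      have : (fun i => σ (σ.symm (v i))) = v := by funext i; simp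
      rwa [this] at hv2
  have hii5 : ∀ n : ↥N, ((P (g * (n : G) * g⁻¹)).map ⇑σ).trace = θ n := by
    intro n
    rw [matmap_trace]
    have h := htr ⟨g * (n : G) * g⁻¹, hN.conj_mem _ n.2 g⟩
    rw [show ((⟨g * (n : G) * g⁻¹, hN.conj_mem _ n.2 g⟩ : ↥N) : G) = g * (n : G) * g⁻¹ from rfl] at h
    rw [h]
    exact hgσ n
  have hii6 : ∀ (n : ↥N), ∀ x ∈ S,
      (P (g * ((n : G) * x) * g⁻¹)).map ⇑σ =
        (P (g * (n : G) * g⁻¹)).map ⇑σ * (P (g * x * g⁻¹)).map ⇑σ ∧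
      (P (g * (x * (n : G)) * g⁻¹)).map ⇑σ =
        (P (g * x * g⁻¹)).map ⇑σ * (P (g * (n : G) * g⁻¹)).map ⇑σ := by
    intro n x hx
    constructor
    · have h := hleft ⟨g * (n : G) * g⁻¹, hN.conj_mem _ n.2 g⟩ _ ((hi x).mp hx)
      rw [show g * ((n : G) * x) * g⁻¹ = (g * (n : G) * g⁻¹) * (g * x * g⁻¹) by group,
        h, matmap_mul]
    · have h := hright ⟨g * (n : G) * g⁻¹, hN.conj_mem _ n.2 g⟩ _ ((hi x).mp hx)
      rw [show g * (x * (n : G)) * g⁻¹ = (g * x * g⁻¹) * (g * (n : G) * g⁻¹) by group,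
        h, matmap_mul]
  -- basic facts about S
  have h1S : (1 : G) ∈ S := by
    rw [hmem']
    intro n e he
    have : e = n := Subtype.ext (by simpa using he)
    rw [this]
  have hNS : ∀ n : ↥N, (n : G) ∈ S := by
    intro n
    rw [hmem']
    intro m e he
    have he2 : e = n * m * n⁻¹ := Subtype.ext (by simpa using he)
    rw [he2, ← hρtr, hρmul, hρmul, Matrix.trace_mul_cycle, ← hρmul, inv_mul_cancel, hρ1,
      Matrix.one_mul, hρtr]
  have hmulS : ∀ a ∈ S, ∀ b ∈ S, a * b ∈ S := by
    intro a ha b hb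
    rw [hmem']
    intro n e he
    have hcN : (b * (n : G) * b⁻¹) ∈ N := hN.conj_mem _ n.2 b
    have h1 : θ e = θ (⟨b * (n : G) * b⁻¹, hcN⟩ : ↥N) := by
      refine (hmem' a).mp ha _ e ?_
      rw [he]
      show a * b * (n : G) * (a * b)⁻¹ = a * (b * (n : G) * b⁻¹) * a⁻¹
      group
    have h2 : θ (⟨b * (n : G) * b⁻¹, hcN⟩ : ↥N) = θ n := (hmem' b).mp hb _ _ rfl
    rw [h1, h2]
  -- P 1 = 1
  have hP1 : P 1 = 1 := by
    have h := hres 1 1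
    simp only [OneMemClass.coe_one, mul_one] at h
    exact ((hPinv 1 h1S).mul_left_cancel (by rw [← h, Matrix.mul_one])).symm
  -- the twisted representation on N is equivalent to P restricted to N
  obtain ⟨M, hMu, hMc⟩ :=
    equiv_of_eq_trace hd (fun n : ↥N => P (n : G))
      (fun n : ↥N => (P (g * (n : G) * g⁻¹)).map ⇑σ)
      (by simpa using hP1)
      (by intro a b; simpa using hres a b)
      (by intro a b; simpa using hii3 a b)
      hirr hii4
      (by intro a; rw [htr a, hii5 a])
  have hMdet : IsUnit M.det := (Matrix.isUnit_iff_isUnit_det M).mp hMu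
  have hMMi : M * M⁻¹ = 1 := Matrix.mul_nonsing_inv M hMdet
  have hMiM : M⁻¹ * M = 1 := Matrix.nonsing_inv_mul M hMdet
  have hMiu : IsUnit M⁻¹ := ⟨⟨M⁻¹, M, hMiM, hMMi⟩, rfl⟩
  -- notation for the twisted map
  set Qf : G → Matrix (Fin d) (Fin d) ℂ := fun x => (P (g * x * g⁻¹)).map ⇑σ with hQfdef
  have hQfu : ∀ x ∈ S, IsUnit (Qf x) := hii1
  have hQmulL : ∀ (n : ↥N), ∀ x ∈ S, Qf ((n : G) * x) = Qf (n : G) * Qf x :=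
    fun n x hx => (hii6 n x hx).1
  have hQmulR : ∀ (n : ↥N), ∀ x ∈ S, Qf (x * (n : G)) = Qf x * Qf (n : G) :=
    fun n x hx => (hii6 n x hx).2
  have hMcQ : ∀ n : ↥N, Qf (n : G) = M⁻¹ * P (n : G) * M := hMc
  have hPnM : ∀ n : ↥N, P (n : G) * M = M * Qf (n : G) := by
    intro n
    rw [hMcQ n]
    calc P (n : G) * M = M * (M⁻¹ * (P (n : G) * M)) :=
          (Matrix.mul_nonsing_inv_cancel_left _ _ hMdet).symm
    _ = M * (M⁻¹ * P (n : G) * M) := by simp only [Matrix.mul_assoc]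
  have hMiP : ∀ n : ↥N, M⁻¹ * P (n : G) = Qf (n : G) * M⁻¹ := by
    intro n
    rw [hMcQ n]
    exact (Matrix.mul_nonsing_inv_cancel_right _ _ hMdet).symm
  -- the scalar-valued comparison map
  obtain ⟨T, hTdef⟩ : ∃ T : G → Matrix (Fin d) (Fin d) ℂ,
      T = fun x => M * Qf x * M⁻¹ * (P x)⁻¹ := ⟨_, rfl⟩
  have hTcomm : ∀ x ∈ S, ∀ n : ↥N, P (n : G) * T x = T x * P (n : G) := by
    intro x hx n
    simp only [hTdef]
    have hPxdet : IsUnit (P x).det := (Matrix.isUnit_iff_isUnit_det _).mp (hPinv x hx)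
    have hn'N : (x⁻¹ * (n : G) * x) ∈ N := by simpa using hN.conj_mem (n : G) n.2 x⁻¹
    set n' : ↥N := ⟨x⁻¹ * (n : G) * x, hn'N⟩ with hn'def
    have harg : (n : G) * x = x * (n' : G) := by
      show (n : G) * x = x * (x⁻¹ * (n : G) * x)
      group
    have e1 : P (n : G) * (M * Qf x * M⁻¹ * (P x)⁻¹)
        = M * Qf ((n : G) * x) * M⁻¹ * (P x)⁻¹ := by
      calc P (n : G) * (M * Qf x * M⁻¹ * (P x)⁻¹)
          = (P (n : G) * M) * Qf x * M⁻¹ * (P x)⁻¹ := by simp only [Matrix.mul_assoc]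
        _ = (M * Qf (n : G)) * Qf x * M⁻¹ * (P x)⁻¹ := by rw [hPnM n]
        _ = M * (Qf (n : G) * Qf x) * M⁻¹ * (P x)⁻¹ := by simp only [Matrix.mul_assoc]
        _ = M * Qf ((n : G) * x) * M⁻¹ * (P x)⁻¹ := by rw [hQmulL n x hx]
    have h5 : P (n : G) * P x = P x * P (n' : G) := by
      rw [← hleft n x hx, harg]
      exact hright n' x hx
    have hcomm : (P x)⁻¹ * P (n : G) = P (n' : G) * (P x)⁻¹ := by
      calc (P x)⁻¹ * P (n : G) = (P x)⁻¹ * P (n : G) * P x * (P x)⁻¹ :=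
            (Matrix.mul_nonsing_inv_cancel_right _ _ hPxdet).symm
      _ = (P x)⁻¹ * (P (n : G) * P x) * (P x)⁻¹ := by simp only [Matrix.mul_assoc]
      _ = (P x)⁻¹ * (P x * P (n' : G)) * (P x)⁻¹ := by rw [h5]
      _ = P (n' : G) * (P x)⁻¹ := by rw [Matrix.nonsing_inv_mul_cancel_left _ _ hPxdet]
    have e2 : M * Qf x * M⁻¹ * (P x)⁻¹ * P (n : G)
        = M * Qf ((n : G) * x) * M⁻¹ * (P x)⁻¹ := by
      calc M * Qf x * M⁻¹ * (P x)⁻¹ * P (n : G)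
          = M * Qf x * M⁻¹ * ((P x)⁻¹ * P (n : G)) := by simp only [Matrix.mul_assoc]
        _ = M * Qf x * M⁻¹ * (P (n' : G) * (P x)⁻¹) := by rw [hcomm]
        _ = M * Qf x * (M⁻¹ * P (n' : G)) * (P x)⁻¹ := by simp only [Matrix.mul_assoc]
        _ = M * Qf x * (Qf (n' : G) * M⁻¹) * (P x)⁻¹ := by rw [hMiP n']
        _ = M * (Qf x * Qf (n' : G)) * M⁻¹ * (P x)⁻¹ := by simp only [Matrix.mul_assoc]
        _ = M * Qf (x * (n' : G)) * M⁻¹ * (P x)⁻¹ := by rw [hQmulR n' x hx]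
        _ = M * Qf ((n : G) * x) * M⁻¹ * (P x)⁻¹ := by rw [← harg]
    rw [e1, e2]
  have hTscal : ∀ x ∈ S, ∃ c : ℂ, T x = c • 1 := by
    intro x hx
    exact schur_scalar hd (fun n : ↥N => P (n : G)) hirr (T x)
      (fun n => hTcomm x hx n)
  obtain ⟨μ, hμdef⟩ : ∃ μ : G → ℂ,
      μ = fun x => if hx : x ∈ S then (hTscal x hx).choose else 1 := ⟨_, rfl⟩
  have hμspec : ∀ x, ∀ hx : x ∈ S, T x = μ x • 1 := by
    intro x hx
    rw [hμdef]
    simp only [dif_pos hx]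
    exact (hTscal x hx).choose_spec
  -- T x is a unit for x in S
  have hTunit : ∀ x ∈ S, IsUnit (T x) := by
    intro x hx
    have hPx := hPinv x hx
    have hPxdet : IsUnit (P x).det := (Matrix.isUnit_iff_isUnit_det _).mp hPx
    have hPxiu : IsUnit (P x)⁻¹ :=
      ⟨⟨(P x)⁻¹, P x, Matrix.nonsing_inv_mul _ hPxdet, Matrix.mul_nonsing_inv _ hPxdet⟩, rfl⟩
    rw [hTdef]
    exact ((hMu.mul (hQfu x hx)).mul hMiu).mul hPxiu
  have hμne : ∀ x ∈ S, μ x ≠ 0 := by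
    intro x hx h0
    have hu := hTunit x hx
    rw [hμspec x hx, h0, zero_smul] at hu
    rw [isUnit_zero_iff] at hu
    have := congrFun (congrFun hu ⟨0, hd⟩) ⟨0, hd⟩
    simp [Matrix.one_apply] at this
  -- μ 1 = 1
  have hQf1 : Qf 1 = 1 := by
    rw [hQfdef]
    show (P (g * 1 * g⁻¹)).map ⇑σ = 1
    rw [show g * (1 : G) * g⁻¹ = 1 by group, hP1, matmap_one]
  have hT1 : T 1 = 1 := by
    rw [hTdef]
    show M * Qf 1 * M⁻¹ * (P 1)⁻¹ = 1
    rw [hQf1, hP1, inv_one, Matrix.mul_one, Matrix.mul_one, hMMi]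
  have hμ1 : μ 1 = 1 := by
    have h := hμspec 1 h1S
    rw [hT1] at h
    have h2 : μ 1 • (1 : Matrix (Fin d) (Fin d) ℂ) = (1 : ℂ) • 1 := by
      rw [one_smul, ← h]
    exact smul_one_inj hd h2
  -- μ is constant on cosets of N
  have hμconst : ∀ (n : ↥N), ∀ x ∈ S, μ ((n : G) * x) = μ x := by
    intro n x hx
    have hnx : (n : G) * x ∈ S := hmulS _ (hNS n) _ hx
    have hPxdet : IsUnit (P x).det := (Matrix.isUnit_iff_isUnit_det _).mp (hPinv x hx)
    have hPndet : IsUnit (P (n : G)).det :=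
      (Matrix.isUnit_iff_isUnit_det _).mp (hPinv _ (hNS n))
    have hTnx : T ((n : G) * x) = T x := by
      have hinv : (P ((n : G) * x))⁻¹ = (P x)⁻¹ * (P (n : G))⁻¹ := by
        rw [hleft n x hx, Matrix.mul_inv_rev]
      have e3 : T ((n : G) * x) = P (n : G) * T x * (P (n : G))⁻¹ := by
        simp only [hTdef]
        calc M * Qf ((n : G) * x) * M⁻¹ * (P ((n : G) * x))⁻¹
            = M * (Qf (n : G) * Qf x) * M⁻¹ * ((P x)⁻¹ * (P (n : G))⁻¹) := by
              rw [hQmulL n x hx, hinv]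
          _ = (M * Qf (n : G)) * Qf x * M⁻¹ * (P x)⁻¹ * (P (n : G))⁻¹ := by
              simp only [Matrix.mul_assoc]
          _ = (P (n : G) * M) * Qf x * M⁻¹ * (P x)⁻¹ * (P (n : G))⁻¹ := by rw [hPnM n]
          _ = P (n : G) * (M * Qf x * M⁻¹ * (P x)⁻¹) * (P (n : G))⁻¹ := by
              simp only [Matrix.mul_assoc]
      rw [e3, hTcomm x hx n, Matrix.mul_nonsing_inv_cancel_right _ _ hPndet]
    have h1 := hμspec _ hnx
    have h2 := hμspec x hx
    rw [hTnx, h2] at h1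
    exact (smul_one_inj hd h1).symm
  -- the conjugating matrix relation on all of S
  have hQfeq : ∀ x ∈ S, Qf x = μ x • (M⁻¹ * P x * M) := by
    intro x hx
    have hPxdet : IsUnit (P x).det := (Matrix.isUnit_iff_isUnit_det _).mp (hPinv x hx)
    have hTx := hμspec x hx
    have key : M * Qf x = μ x • (P x * M) := by
      have h1 : T x * (P x * M) = M * Qf x := by
        simp only [hTdef]
        calc M * Qf x * M⁻¹ * (P x)⁻¹ * (P x * M)
            = M * Qf x * M⁻¹ * ((P x)⁻¹ * (P x * M)) := by simp only [Matrix.mul_assoc]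
          _ = M * Qf x * M⁻¹ * M := by rw [Matrix.nonsing_inv_mul_cancel_left _ _ hPxdet]
          _ = M * Qf x := by rw [Matrix.nonsing_inv_mul_cancel_right _ _ hMdet]
      rw [← h1, hTx, smul_mul_assoc, Matrix.one_mul]
    calc Qf x = M⁻¹ * (M * Qf x) := (Matrix.nonsing_inv_mul_cancel_left _ _ hMdet).symm
      _ = M⁻¹ * (μ x • (P x * M)) := by rw [key]
      _ = μ x • (M⁻¹ * (P x * M)) := by rw [mul_smul_comm]
      _ = μ x • (M⁻¹ * P x * M) := by rw [Matrix.mul_assoc]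
  refine ⟨hi, ⟨hii1, hii2, hii3, hii4, hii5, hii6⟩,
    ⟨μ, hμne, hμ1, hμconst, ⟨M, hMu, fun x hx => hQfeq x hx⟩, ?_⟩⟩
  -- uniqueness
  intro μ' hμ'1 hμ'const ⟨M', hM'u, hM'eq⟩ x hx
  have hM'det : IsUnit M'.det := (Matrix.isUnit_iff_isUnit_det M').mp hM'u
  have hM'Mi : M' * M'⁻¹ = 1 := Matrix.mul_nonsing_inv M' hM'det
  have hM'iM : M'⁻¹ * M' = 1 := Matrix.nonsing_inv_mul M' hM'det
  -- μ' is 1 on N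
  have hμ'N : ∀ n : ↥N, μ' (n : G) = 1 := by
    intro n
    have := hμ'const n 1 h1S
    rw [mul_one] at this
    rw [this, hμ'1]
  -- both M and M' conjugate P to Qf on N
  have hE : ∀ n : ↥N, M'⁻¹ * P (n : G) * M' = M⁻¹ * P (n : G) * M := by
    intro n
    have h1 := hM'eq (n : G) (hNS n)
    rw [hμ'N n, one_smul] at h1
    rw [← h1]
    exact (hMcQ n).symm ▸ (hMc n).symm
  -- so M' * M⁻¹ commutes with P on N
  have hDcomm : ∀ n : ↥N, P (n : G) * (M' * M⁻¹) = (M' * M⁻¹) * P (n : G) := by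
    intro n
    calc P (n : G) * (M' * M⁻¹)
        = M' * (M'⁻¹ * (P (n : G) * (M' * M⁻¹))) :=
          (Matrix.mul_nonsing_inv_cancel_left _ _ hM'det).symm
      _ = M' * (M'⁻¹ * P (n : G) * M') * M⁻¹ := by simp only [Matrix.mul_assoc]
      _ = M' * (M⁻¹ * P (n : G) * M) * M⁻¹ := by rw [hE n]
      _ = M' * M⁻¹ * P (n : G) * (M * M⁻¹) := by simp only [Matrix.mul_assoc]
      _ = (M' * M⁻¹) * P (n : G) := by rw [hMMi, Matrix.mul_one]
  obtain ⟨c, hc⟩ := schur_scalar hd (fun n : ↥N => P (n : G)) hirr (M' * M⁻¹) hDcomm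
  have hM'cM : M' = c • M := by
    have h1 : M' = (M' * M⁻¹) * M := (Matrix.nonsing_inv_mul_cancel_right _ _ hMdet).symm
    rw [h1, hc, smul_mul_assoc, Matrix.one_mul]
  have hc0 : c ≠ 0 := by
    intro h0
    rw [h0, zero_smul] at hM'cM
    rw [hM'cM] at hM'u
    rw [isUnit_zero_iff] at hM'u
    have := congrFun (congrFun hM'u ⟨0, hd⟩) ⟨0, hd⟩
    simp [Matrix.one_apply] at this
  have hM'inv : M'⁻¹ = c⁻¹ • M⁻¹ := by
    apply Matrix.inv_eq_left_inv
    rw [hM'cM, smul_mul_assoc, mul_smul_comm, smul_smul, inv_mul_cancel₀ hc0, hMiM, one_smul]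
  have hconj : M'⁻¹ * P x * M' = M⁻¹ * P x * M := by
    rw [hM'inv, hM'cM, smul_mul_assoc, smul_mul_assoc, mul_smul_comm, smul_smul,
      inv_mul_cancel₀ hc0, one_smul]
  have h1 := hM'eq x hx
  rw [hconj] at h1
  have h2 := hQfeq x hx
  rw [hQfdef] at h2
  have h3 : μ' x • (M⁻¹ * P x * M) = μ x • (M⁻¹ * P x * M) := by rw [← h1, ← h2]
  have hun : IsUnit (M⁻¹ * P x * M) := (hMiu.mul (hPinv x hx)).mul hMu
  exact smul_cancel_unit hd hun h3
end

section
/- Let G be a finite group, N a normal subgroup of G, θ an irreducible complex character of N with stabilizer G_θ, and P a projective representation of G_θ associated with θ with factor set α. Let σ be a ring automorphism of ℂ and g ∈ G with θ^{gσ} = θ, and write g = t·x with t ∈ G_θ and x ∈ G. Then θ^{xσ} = θ, conjugation by x maps G_θ onto itself, and if μ_{gσ}, μ_{xσ} : G_θ → ℂ∖{0} are the unique functions with value 1 at the identity and constant on cosets of N for which there exist invertible matrices M and M' with σ(P(g·y·g⁻¹)) = μ_{gσ}(y)·M⁻¹·P(y)·M and σ(P(x·y·x⁻¹)) = μ_{xσ}(y)·M'⁻¹·P(y)·M'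 for all y ∈ G_θ, then μ_{gσ}(y) = σ(μ_t(x·y·x⁻¹))·μ_{xσ}(y) for all y ∈ G_θ, where μ_t(z) = α(t,t⁻¹)·α(t, z·t⁻¹)⁻¹·α(z, t⁻¹)⁻¹. -/
/-- Lemma 1.5(b) of the paper.  Let `N ⊴ G`, `θ` an irreducible complex
character of `N` with stabilizer `G_θ`, `P` a projective representation of `G_θ` associated
with `θ` with factor set `α`.  Let `σ` be a ring automorphism of `ℂ` and `g ∈ G` with
`θ^{gσ} = θ`, and write `g = t * x` with `t ∈ G_θ`.  Then `θ^{xσ} = θ`, conjugation by `x`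
maps `G_θ` onto itself, and `μ_{gσ}(y) = σ(μ_t(x y x⁻¹)) * μ_{xσ}(y)` for all `y ∈ G_θ`,
where `μ_t(z) = α(t,t⁻¹) * α(t, z t⁻¹)⁻¹ * α(z, t⁻¹)⁻¹`. -/
theorem projectiveRep_mu_decomposition
    {G : Type*} [Group G] [Finite G] (N : Subgroup G) (hN : N.Normal)
    (d : ℕ) (hd : 0 < d) (θ : ↥N → ℂ)
    -- the stabilizer `G_θ` :
    (S : Set G) (hS : S = charStabSet N hN θ)
    -- `P` is a projective representation of `G_θ` with factor set `α`, associated with `θ` :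
    (P : G → Matrix (Fin d) (Fin d) ℂ) (α : G → G → ℂ)
    (hPinv : ∀ x ∈ S, IsUnit (P x))
    (hα : ∀ x ∈ S, ∀ y ∈ S, α x y ≠ 0)
    (hfac : ∀ x ∈ S, ∀ y ∈ S, P x * P y = α x y • P (x * y))
    (hres : ∀ n m : ↥N, P ((n : G) * (m : G)) = P (n : G) * P (m : G))
    (hirr : ∀ W : Submodule ℂ (Fin d → ℂ),
      (∀ n : ↥N, ∀ v ∈ W, (P (n : G)).mulVec v ∈ W) → W = ⊥ ∨ W = ⊤)
    (htr : ∀ n : ↥N, (P (n : G)).trace = θ n)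
    (hleft : ∀ (n : ↥N), ∀ y ∈ S, P ((n : G) * y) = P (n : G) * P y)
    (hright : ∀ (n : ↥N), ∀ y ∈ S, P (y * (n : G)) = P y * P (n : G))
    -- `σ` is a ring automorphism of `ℂ`, `g = t * x` with `t ∈ G_θ`, and `θ^{gσ} = θ` :
    (σ : ℂ ≃+* ℂ) (g t x : G) (ht : t ∈ S) (hg : g = t * x)
    (hgσ : ∀ n : ↥N, σ (θ ⟨g * (n : G) * g⁻¹, hN.conj_mem (n : G) n.2 g⟩) = θ n)
    -- `μ_{gσ}` is the unique function with value `1` at `1`, constant on cosets of `N`,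
    -- satisfying `σ(P (g y g⁻¹)) = μ_{gσ}(y) • (M⁻¹ * P y * M)` for some invertible `M` :
    (μgσ : G → ℂ) (hμgσ1 : μgσ 1 = 1)
    (hμgσcoset : ∀ (n : ↥N), ∀ y ∈ S, μgσ ((n : G) * y) = μgσ y)
    (hμgσ : ∃ M : Matrix (Fin d) (Fin d) ℂ, IsUnit M ∧
      ∀ y ∈ S, (P (g * y * g⁻¹)).map ⇑σ = μgσ y • (M⁻¹ * P y * M))
    -- `μ_{xσ}` is the analogous function for `x` :
    (μxσ : G → ℂ) (hμxσ1 : μxσ 1 = 1)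
    (hμxσcoset : ∀ (n : ↥N), ∀ y ∈ S, μxσ ((n : G) * y) = μxσ y)
    (hμxσ : ∃ M' : Matrix (Fin d) (Fin d) ℂ, IsUnit M' ∧
      ∀ y ∈ S, (P (x * y * x⁻¹)).map ⇑σ = μxσ y • (M'⁻¹ * P y * M')) :
    -- `θ^{xσ} = θ` :
    (∀ n : ↥N, σ (θ ⟨x * (n : G) * x⁻¹, hN.conj_mem (n : G) n.2 x⟩) = θ n) ∧
    -- conjugation by `x` maps `G_θ` onto itself :
    (∀ y : G, y ∈ S ↔ x * y * x⁻¹ ∈ S) ∧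
    -- `μ_{gσ}(y) = σ(μ_t(x y x⁻¹)) * μ_{xσ}(y)` where
    -- `μ_t(z) = α(t,t⁻¹) * α(t, z t⁻¹)⁻¹ * α(z, t⁻¹)⁻¹` :
    (∀ y ∈ S,
      μgσ y =
        σ (α t t⁻¹ * (α t (x * y * x⁻¹ * t⁻¹))⁻¹ * (α (x * y * x⁻¹) t⁻¹)⁻¹) * μxσ y) := by
  subst hS
  subst hg
  haveI : Nonempty (Fin d) := ⟨⟨0, hd⟩⟩
  have θcong : ∀ (a b : G) (ha : a ∈ N) (hb : b ∈ N), a = b → θ ⟨a, ha⟩ = θ ⟨b, hb⟩ := by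
    rintro a b ha hb rfl; rfl
  -- basic closure facts about the stabilizer set
  have h1S : (1 : G) ∈ charStabSet N hN θ := by
    intro n; exact θcong _ _ _ n.2 (by group)
  have hmulS : ∀ a ∈ charStabSet N hN θ, ∀ b ∈ charStabSet N hN θ,
      a * b ∈ charStabSet N hN θ := by
    intro a ha b hb n
    have e : θ ⟨a * b * (n : G) * (a * b)⁻¹, hN.conj_mem (n : G) n.2 (a * b)⟩
        = θ ⟨a * ((⟨b * (n : G) * b⁻¹, hN.conj_mem (n : G) n.2 b⟩ : ↥N) : G) * a⁻¹,
            hN.conj_mem _ (hN.conj_mem (n : G) n.2 b) a⟩ :=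
      θcong _ _ _ _ (by group)
    exact e.trans ((ha ⟨b * (n : G) * b⁻¹, hN.conj_mem (n : G) n.2 b⟩).trans (hb n))
  have hinvS : ∀ a ∈ charStabSet N hN θ, a⁻¹ ∈ charStabSet N hN θ := by
    intro a ha n
    have hmem : a⁻¹ * (n : G) * a ∈ N := by simpa using hN.conj_mem (n : G) n.2 a⁻¹
    have h2 := ha ⟨a⁻¹ * (n : G) * a, hmem⟩
    have e : θ ⟨a * (a⁻¹ * (n : G) * a) * a⁻¹, hN.conj_mem _ hmem a⟩ = θ n :=
      θcong _ _ _ n.2 (by group)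
    have key : θ (⟨a⁻¹ * (n : G) * a, hmem⟩ : ↥N) = θ n := h2.symm.trans e
    exact (θcong _ _ (hN.conj_mem (n : G) n.2 a⁻¹) hmem (by group)).trans key
  -- P 1 = 1
  have hP1 : P (1 : G) = 1 := by
    have h := hres 1 1
    simp only [OneMemClass.coe_one, one_mul] at h
    obtain ⟨u, hu⟩ := hPinv 1 h1S
    rw [← hu] at h
    have h1 : (1 : Matrix (Fin d) (Fin d) ℂ) = ↑u := by
      calc (1 : Matrix (Fin d) (Fin d) ℂ) = ↑u⁻¹ * ↑u := u.inv_mul.symm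
        _ = ↑u⁻¹ * (↑u * ↑u) := by rw [← h]
        _ = ↑u := by rw [← mul_assoc, u.inv_mul, one_mul]
    rw [← hu, ← h1]
  have hPmul : ∀ a b : ↥N, P ((a * b : ↥N) : G) = P (a : G) * P (b : G) := by
    intro a b; rw [Subgroup.coe_mul]; exact hres a b
  have hPinvN : ∀ m : ↥N, P ((m⁻¹ : ↥N) : G) * P (m : G) = 1 := by
    intro m
    rw [← hPmul, inv_mul_cancel, OneMemClass.coe_one, hP1]
  -- N ⊆ S
  have hNS : ∀ m : ↥N, (m : G) ∈ charStabSet N hN θ := by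
    intro m n
    have e : (⟨(m : G) * (n : G) * (m : G)⁻¹, hN.conj_mem (n : G) n.2 (m : G)⟩ : ↥N)
        = m * n * m⁻¹ := Subtype.ext (by simp)
    rw [e, ← htr (m * n * m⁻¹), ← htr n]
    have e2 : P ((m * n * m⁻¹ : ↥N) : G) = P (m : G) * P (n : G) * P ((m⁻¹ : ↥N) : G) := by
      rw [hPmul, hPmul]
    rw [e2, Matrix.trace_mul_cycle, hPinvN, one_mul]
  -- Part 1 : θ^{xσ} = θ
  have part1 : ∀ n : ↥N, σ (θ ⟨x * (n : G) * x⁻¹, hN.conj_mem (n : G) n.2 x⟩) = θ n := by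
    intro n
    set m : ↥N := ⟨x * (n : G) * x⁻¹, hN.conj_mem (n : G) n.2 x⟩ with hm
    have e1 : θ ⟨t * x * (n : G) * (t * x)⁻¹, hN.conj_mem (n : G) n.2 (t * x)⟩
        = θ ⟨t * (m : G) * t⁻¹, hN.conj_mem (m : G) m.2 t⟩ :=
      θcong _ _ _ _ (by show t * x * (n : G) * (t * x)⁻¹ = t * (x * (n : G) * x⁻¹) * t⁻¹; group)
    calc σ (θ m) = σ (θ ⟨t * (m : G) * t⁻¹, hN.conj_mem (m : G) m.2 t⟩) :=
          congrArg σ (ht m).symm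
      _ = σ (θ ⟨t * x * (n : G) * (t * x)⁻¹, hN.conj_mem (n : G) n.2 (t * x)⟩) :=
          congrArg σ e1.symm
      _ = θ n := hgσ n
  -- the reverse conjugation identity
  have part1' : ∀ n : ↥N, θ (⟨x⁻¹ * (n : G) * x, by simpa using hN.conj_mem (n : G) n.2 x⁻¹⟩ : ↥N)
      = σ (θ n) := by
    intro n
    set k : ↥N := ⟨x⁻¹ * (n : G) * x, by simpa using hN.conj_mem (n : G) n.2 x⁻¹⟩ with hk
    have h := part1 k
    have e : θ ⟨x * (k : G) * x⁻¹, hN.conj_mem (k : G) k.2 x⟩ = θ n :=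
      θcong _ _ _ n.2 (by show x * (x⁻¹ * (n : G) * x) * x⁻¹ = (n : G); group)
    rw [e] at h
    exact h.symm
  -- Part 2 : conjugation by x maps the stabilizer onto itself
  have part2 : ∀ y : G, y ∈ charStabSet N hN θ ↔ x * y * x⁻¹ ∈ charStabSet N hN θ := by
    intro y
    constructor
    · intro hy n
      have hkmem : x⁻¹ * (n : G) * x ∈ N := by simpa using hN.conj_mem (n : G) n.2 x⁻¹
      set k : ↥N := ⟨x⁻¹ * (n : G) * x, hkmem⟩ with hkdef
      set k' : ↥N := ⟨y * (k : G) * y⁻¹, hN.conj_mem (k : G) k.2 y⟩ with hk'def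
      have e1 : θ ⟨x * y * x⁻¹ * (n : G) * (x * y * x⁻¹)⁻¹, hN.conj_mem (n : G) n.2 (x * y * x⁻¹)⟩
          = θ ⟨x * (k' : G) * x⁻¹, hN.conj_mem (k' : G) k'.2 x⟩ :=
        θcong _ _ _ _ (by
          show x * y * x⁻¹ * (n : G) * (x * y * x⁻¹)⁻¹ = x * (y * (x⁻¹ * (n : G) * x) * y⁻¹) * x⁻¹
          group)
      have h2 : σ (θ ⟨x * (k' : G) * x⁻¹, hN.conj_mem (k' : G) k'.2 x⟩) = θ k' := part1 k'
      have h3 : θ k' = θ k := hy k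
      have h4 : θ k = σ (θ n) := part1' n
      have h5 : σ (θ ⟨x * y * x⁻¹ * (n : G) * (x * y * x⁻¹)⁻¹,
          hN.conj_mem (n : G) n.2 (x * y * x⁻¹)⟩) = σ (θ n) := by
        rw [e1, h2, h3, h4]
      exact σ.injective h5
    · intro hy n
      set n' : ↥N := ⟨x * (n : G) * x⁻¹, hN.conj_mem (n : G) n.2 x⟩ with hn'def
      set w : ↥N := ⟨y * (n : G) * y⁻¹, hN.conj_mem (n : G) n.2 y⟩ with hwdef
      have h1 := hy n'
      have e1 : θ ⟨x * y * x⁻¹ * (n' : G) * (x * y * x⁻¹)⁻¹,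
          hN.conj_mem (n' : G) n'.2 (x * y * x⁻¹)⟩
          = θ ⟨x * (w : G) * x⁻¹, hN.conj_mem (w : G) w.2 x⟩ :=
        θcong _ _ _ _ (by
          show x * y * x⁻¹ * (x * (n : G) * x⁻¹) * (x * y * x⁻¹)⁻¹
            = x * (y * (n : G) * y⁻¹) * x⁻¹
          group)
      rw [e1] at h1
      -- h1 : θ ⟨x w x⁻¹⟩ = θ n'
      have h2 : σ (θ ⟨x * (w : G) * x⁻¹, hN.conj_mem (w : G) w.2 x⟩) = θ w := part1 w
      have h3 : σ (θ ⟨x * (n : G) * x⁻¹, hN.conj_mem (n : G) n.2 x⟩) = θ n := part1 n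
      calc θ w = σ (θ ⟨x * (w : G) * x⁻¹, hN.conj_mem (w : G) w.2 x⟩) := h2.symm
        _ = σ (θ n') := congrArg σ h1
        _ = θ n := h3
  refine ⟨part1, part2, ?_⟩
  -- Part 3
  obtain ⟨M, hM, hMeq⟩ := hμgσ
  obtain ⟨M', hM', hM'eq⟩ := hμxσ
  -- matrix map lemmas
  have mapmul : ∀ A B : Matrix (Fin d) (Fin d) ℂ, (A * B).map ⇑σ = A.map ⇑σ * B.map ⇑σ := by
    intro A B; ext i j; simp [Matrix.mul_apply, Matrix.map_apply, map_sum]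
  have mapsmul : ∀ (c : ℂ) (A : Matrix (Fin d) (Fin d) ℂ), (c • A).map ⇑σ = σ c • A.map ⇑σ := by
    intro c A; ext i j; simp [Matrix.map_apply]
  have mapone : (1 : Matrix (Fin d) (Fin d) ℂ).map ⇑σ = 1 := by
    ext i j; by_cases h : i = j <;> simp [Matrix.map_apply, Matrix.one_apply, h]
  have mapunit : ∀ A : Matrix (Fin d) (Fin d) ℂ, IsUnit A → IsUnit (A.map ⇑σ) := by
    rintro A ⟨u, hu⟩
    refine ⟨⟨A.map ⇑σ, ((↑u⁻¹ : Matrix (Fin d) (Fin d) ℂ)).map ⇑σ, ?_, ?_⟩, rfl⟩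
    · rw [← mapmul, ← hu, u.mul_inv, mapone]
    · rw [← mapmul, ← hu, u.inv_mul, mapone]
  -- scalar cancellation helpers
  have smul_cancel : ∀ (c c' : ℂ) (A : Matrix (Fin d) (Fin d) ℂ), A ≠ 0 → c • A = c' • A → c = c' := by
    intro c c' A hA h
    have h0 : (c - c') • A = 0 := by rw [sub_smul, h, sub_self]
    rcases smul_eq_zero.mp h0 with h' | h'
    · exact sub_eq_zero.mp h'
    · exact absurd h' hA
  have unit_ne : ∀ A : Matrix (Fin d) (Fin d) ℂ, IsUnit A → A ≠ 0 := by
    rintro A ⟨u, hu⟩ h0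
    have h1 : (1 : Matrix (Fin d) (Fin d) ℂ) = 0 := by
      rw [← u.mul_inv, hu, h0, zero_mul]
    have h2 : (1 : Matrix (Fin d) (Fin d) ℂ) ⟨0, hd⟩ ⟨0, hd⟩ = 0 := by rw [h1]; rfl
    simp [Matrix.one_apply_eq] at h2
  -- basic facts about t
  have htinv := hinvS t ht
  have f3 : P t * P t⁻¹ = α t t⁻¹ • (1 : Matrix (Fin d) (Fin d) ℂ) := by
    rw [hfac t ht t⁻¹ htinv, show t * t⁻¹ = 1 by group, hP1]
  have f4 : P t⁻¹ * P t = α t⁻¹ t • (1 : Matrix (Fin d) (Fin d) ℂ) := by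
    rw [hfac t⁻¹ htinv t ht, show t⁻¹ * t = 1 by group, hP1]
  have hPt_ne : P t ≠ 0 := unit_ne _ (hPinv t ht)
  have hα_symm : α t⁻¹ t = α t t⁻¹ := by
    have h1 : P t * P t⁻¹ * P t = α t t⁻¹ • P t := by rw [f3, Matrix.smul_mul, one_mul]
    have h2 : P t * P t⁻¹ * P t = α t⁻¹ t • P t := by
      rw [mul_assoc, f4, Matrix.mul_smul, mul_one]
    exact smul_cancel _ _ _ hPt_ne (h2.symm.trans h1)
  -- α(m, t⁻¹) = 1 for m ∈ N
  have αN1 : ∀ m : ↥N, α (m : G) t⁻¹ = 1 := by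
    intro m
    have h1 := hfac (m : G) (hNS m) t⁻¹ htinv
    rw [hleft m t⁻¹ htinv] at h1
    have hne : P (m : G) * P t⁻¹ ≠ 0 := unit_ne _ ((hPinv _ (hNS m)).mul (hPinv _ htinv))
    exact (smul_cancel 1 _ _ hne (by rw [one_smul]; exact h1)).symm
  -- α(t, m * t⁻¹) = α(t, t⁻¹) for m ∈ N
  have αN2 : ∀ m : ↥N, α t ((m : G) * t⁻¹) = α t t⁻¹ := by
    intro m
    set m' : ↥N := ⟨t * (m : G) * t⁻¹, hN.conj_mem (m : G) m.2 t⟩ with hm'def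
    have hmt : (m : G) * t⁻¹ ∈ charStabSet N hN θ := hmulS _ (hNS m) _ htinv
    have h1 := hfac t ht ((m : G) * t⁻¹) hmt
    have e : t * ((m : G) * t⁻¹) = (m' : G) := by
      show _ = t * (m : G) * t⁻¹; group
    rw [e, hleft m t⁻¹ htinv] at h1
    have e2 : P t * (P (m : G) * P t⁻¹) = α t t⁻¹ • P (m' : G) := by
      have e3 : P t * P (m : G) = P (m' : G) * P t := by
        rw [← hright m t ht, ← hleft m' t ht]
        exact congrArg P (by show t * (m : G) = t * (m : G) * t⁻¹ * t; group)
      rw [← mul_assoc, e3, mul_assoc, f3, Matrix.mul_smul, mul_one]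
    have hne : P (m' : G) ≠ 0 := unit_ne _ (hPinv _ (hNS m'))
    exact smul_cancel _ _ _ hne (h1.symm.trans e2)
  -- set up the main matrices
  set T : Matrix (Fin d) (Fin d) ℂ := (P t).map ⇑σ with hTdef
  have hT : IsUnit T := mapunit _ (hPinv t ht)
  have T'T : (P t⁻¹).map ⇑σ * T = σ (α t t⁻¹) • 1 := by
    rw [hTdef, ← mapmul, f4, hα_symm, mapsmul, mapone]
  have hM'det := (Matrix.isUnit_iff_isUnit_det M').mp hM'
  have hMdet := (Matrix.isUnit_iff_isUnit_det M).mp hM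
  have hM'M' : M' * M'⁻¹ = 1 := Matrix.mul_nonsing_inv M' hM'det
  have hM'inv : IsUnit M'⁻¹ :=
    ⟨⟨M'⁻¹, M', Matrix.nonsing_inv_mul M' hM'det, hM'M'⟩, rfl⟩
  have hMMl : ∀ Z : Matrix (Fin d) (Fin d) ℂ, M * (M⁻¹ * Z) = Z := by
    intro Z; rw [← mul_assoc, Matrix.mul_nonsing_inv M hMdet, one_mul]
  set R : Matrix (Fin d) (Fin d) ℂ := M * (T * M'⁻¹) with hRdef
  have hR : IsUnit R := hM.mul (hT.mul hM'inv)
  -- the key commutation relation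
  have KEY : ∀ y ∈ charStabSet N hN θ,
      (σ (α (x * y * x⁻¹) t⁻¹ * α t (x * y * x⁻¹ * t⁻¹)) * μgσ y) • (P y * R)
        = (σ (α t t⁻¹) * μxσ y) • (R * P y) := by
    intro y hy
    have hz : x * y * x⁻¹ ∈ charStabSet N hN θ := (part2 y).mp hy
    have hzt : x * y * x⁻¹ * t⁻¹ ∈ charStabSet N hN θ := hmulS _ hz _ htinv
    have f1 := hfac (x * y * x⁻¹) hz t⁻¹ htinv
    have f2 := hfac t ht (x * y * x⁻¹ * t⁻¹) hzt
    have comb : P t * (P (x * y * x⁻¹) * P t⁻¹)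
        = (α (x * y * x⁻¹) t⁻¹ * α t (x * y * x⁻¹ * t⁻¹)) • P (t * x * y * (t * x)⁻¹) := by
      rw [f1, Matrix.mul_smul, f2, smul_smul]
      rw [mul_comm (α (x * y * x⁻¹) t⁻¹)]
      congr 2
      group
    have combσ : T * ((P (x * y * x⁻¹)).map ⇑σ * (P t⁻¹).map ⇑σ)
        = σ (α (x * y * x⁻¹) t⁻¹ * α t (x * y * x⁻¹ * t⁻¹)) • (μgσ y • (M⁻¹ * P y * M)) := by
      rw [hTdef, ← mapmul, ← mapmul, comb, mapsmul, hMeq y hy]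
    rw [hM'eq y hy] at combσ
    have h2 := congrArg (fun A : Matrix (Fin d) (Fin d) ℂ => M * (A * (T * M'⁻¹))) combσ
    simp only [Matrix.smul_mul, Matrix.mul_smul, smul_smul, mul_assoc] at h2
    have inner : (P t⁻¹).map ⇑σ * (T * M'⁻¹) = σ (α t t⁻¹) • M'⁻¹ := by
      rw [← mul_assoc, T'T, Matrix.smul_mul, one_mul]
    rw [inner] at h2
    simp only [Matrix.mul_smul, smul_smul, hM'M', mul_one, hMMl] at h2
    rw [hRdef, mul_comm (σ (α t t⁻¹)) (μxσ y),
      show M * (T * M'⁻¹) * P y = M * (T * (M'⁻¹ * P y)) by rw [mul_assoc, mul_assoc],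
      show x * y * x⁻¹ = x * (y * x⁻¹) from mul_assoc x y x⁻¹,
      show x * (y * x⁻¹) * t⁻¹ = x * (y * (x⁻¹ * t⁻¹)) by group]
    exact h2.symm
  -- Schur: R is a scalar matrix
  have commN : ∀ n : ↥N, P (n : G) * R = R * P (n : G) := by
    intro n
    have hk := KEY (n : G) (hNS n)
    have m : ↥N := ⟨x * (n : G) * x⁻¹, hN.conj_mem (n : G) n.2 x⟩
    have e1 : α (x * (n : G) * x⁻¹) t⁻¹ = 1 :=
      αN1 ⟨x * (n : G) * x⁻¹, hN.conj_mem (n : G) n.2 x⟩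
    have e2 : α t (x * (n : G) * x⁻¹ * t⁻¹) = α t t⁻¹ :=
      αN2 ⟨x * (n : G) * x⁻¹, hN.conj_mem (n : G) n.2 x⟩
    have e3 : μgσ (n : G) = 1 := by
      have h := hμgσcoset n 1 h1S
      rwa [mul_one, hμgσ1] at h
    have e4 : μxσ (n : G) = 1 := by
      have h := hμxσcoset n 1 h1S
      rwa [mul_one, hμxσ1] at h
    rw [e1, e2, e3, e4, one_mul, mul_one] at hk
    have hαtt : σ (α t t⁻¹) ≠ 0 := fun h =>
      hα t ht t⁻¹ htinv (σ.injective (h.trans (map_zero σ).symm))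
    exact smul_right_injective _ hαtt hk
  -- Schur's lemma : R is a scalar matrix
  obtain ⟨lam, hlam⟩ := Module.End.exists_eigenvalue (Matrix.mulVecLin R)
  have hinvar : ∀ n : ↥N, ∀ v ∈ Module.End.eigenspace (Matrix.mulVecLin R) lam,
      (P (n : G)).mulVec v ∈ Module.End.eigenspace (Matrix.mulVecLin R) lam := by
    intro n v hv
    rw [Module.End.mem_eigenspace_iff] at hv ⊢
    rw [Matrix.mulVecLin_apply] at hv ⊢
    rw [Matrix.mulVec_mulVec, ← commN n, ← Matrix.mulVec_mulVec, hv, Matrix.mulVec_smul]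
  have hWtop : Module.End.eigenspace (Matrix.mulVecLin R) lam = ⊤ := by
    rcases hirr _ hinvar with h | h
    · exact absurd h hlam
    · exact h
  have hRv : ∀ v : Fin d → ℂ, R.mulVec v = lam • v := by
    intro v
    have hv : v ∈ Module.End.eigenspace (Matrix.mulVecLin R) lam :=
      hWtop ▸ Submodule.mem_top
    rw [Module.End.mem_eigenspace_iff, Matrix.mulVecLin_apply] at hv
    exact hv
  have hRlam : R = lam • (1 : Matrix (Fin d) (Fin d) ℂ) := by
    apply Matrix.toLin'.injective
    apply LinearMap.ext
    intro v
    rw [Matrix.toLin'_apply, Matrix.toLin'_apply, hRv, Matrix.smul_mulVec,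
      Matrix.one_mulVec]
  have hlam0 : lam ≠ 0 := by
    intro h
    exact unit_ne R hR (by rw [hRlam, h, zero_smul])
  -- conclusion
  intro y hy
  have hk := KEY y hy
  rw [hRlam, Matrix.mul_smul, Matrix.smul_mul, mul_one, one_mul, smul_smul, smul_smul] at hk
  have hPy_ne : P y ≠ 0 := unit_ne _ (hPinv y hy)
  have hk2 := smul_cancel _ _ _ hPy_ne hk
  have hk3 : σ (α (x * y * x⁻¹) t⁻¹ * α t (x * y * x⁻¹ * t⁻¹)) * μgσ y
      = σ (α t t⁻¹) * μxσ y := mul_right_cancel₀ hlam0 hk2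
  have hz : x * y * x⁻¹ ∈ charStabSet N hN θ := (part2 y).mp hy
  have hzt : x * y * x⁻¹ * t⁻¹ ∈ charStabSet N hN θ := hmulS _ hz _ htinv
  have hα1 : σ (α (x * y * x⁻¹) t⁻¹) ≠ 0 := fun h =>
    hα _ hz _ htinv (σ.injective (h.trans (map_zero σ).symm))
  have hα2 : σ (α t (x * y * x⁻¹ * t⁻¹)) ≠ 0 := fun h =>
    hα _ ht _ hzt (σ.injective (h.trans (map_zero σ).symm))
  rw [map_mul] at hk3
  rw [map_mul, map_mul, map_inv₀, map_inv₀]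
  set a := σ (α (x * y * x⁻¹) t⁻¹) with hadef
  set b := σ (α t (x * y * x⁻¹ * t⁻¹)) with hbdef
  set c := σ (α t t⁻¹) with hcdef
  field_simp
  linear_combination hk3
end

section
/- Let G be a group and A an abelian group, both acting on a set Ω with commuting actions, and let ω ∈ Ω. Assume that for every g ∈ G there exists a ∈ A with g·ω = a·ω. Then the stabilizer Stab_G(ω) is a normal subgroup of G, and the assignment sending the coset g·Stab_G(ω) to the coset a·Stab_A(ω), where a is any element of A with g·ω = a·ω, is a well-defined injective group homomorphism from G/Stab_G(ω) into A/Stab_A(ω). -/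
/-- Let a group `G` and an abelian group `A` act on a set `Ω` with commuting
actions, and let `ω ∈ Ω`.  If every `G`-translate of `ω` is also an `A`-translate of `ω`, then
`Stab_G(ω)` is normal in `G` and `g ⬝ Stab_G(ω) ↦ a ⬝ Stab_A(ω)` (where `g • ω = a • ω`) is a
well-defined injective group homomorphism `G/Stab_G(ω) → A/Stab_A(ω)`; equivalently, there is a
homomorphism `φ : G →* A ⧸ Stab_A(ω)` with kernel `Stab_G(ω)` sending `g` to the coset of any
`a` with `g • ω = a • ω`. -/
theorem stabilizer_normal_and_embeds_into_abelian_quotient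
    {G A Ω : Type*} [Group G] [CommGroup A] [MulAction G Ω] [MulAction A Ω]
    [SMulCommClass G A Ω] (ω : Ω)
    (hcover : ∀ g : G, ∃ a : A, g • ω = a • ω) :
    (MulAction.stabilizer G ω).Normal ∧
    ∃ φ : G →* A ⧸ MulAction.stabilizer A ω,
      φ.ker = MulAction.stabilizer G ω ∧
      ∀ (g : G) (a : A), g • ω = a • ω → φ g = QuotientGroup.mk a := by
  classical
  have key : ∀ a b : A, a • ω = b • ω →
      (QuotientGroup.mk a : A ⧸ MulAction.stabilizer A ω) = QuotientGroup.mk b := by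
    intro a b h
    refine (QuotientGroup.eq).mpr ?_
    have : (a⁻¹ * b) • ω = ω := by
      rw [mul_smul, ← h, ← mul_smul, inv_mul_cancel, one_smul]
    exact this
  let f : G → A ⧸ MulAction.stabilizer A ω := fun g => QuotientGroup.mk (hcover g).choose
  have hf : ∀ (g : G) (a : A), g • ω = a • ω → f g = QuotientGroup.mk a := by
    intro g a h
    exact key _ _ (((hcover g).choose_spec).symm.trans h)
  have hmul : ∀ g₁ g₂ : G, f (g₁ * g₂) = f g₁ * f g₂ := by
    intro g₁ g₂
    obtain ⟨a₁, h₁⟩ := hcover g₁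
    obtain ⟨a₂, h₂⟩ := hcover g₂
    have : (g₁ * g₂) • ω = (a₁ * a₂) • ω := by
      rw [mul_smul, h₂, smul_comm, h₁, ← mul_smul, mul_comm]
    rw [hf _ _ this, hf _ _ h₁, hf _ _ h₂]
    rfl
  let φ : G →* A ⧸ MulAction.stabilizer A ω := MonoidHom.mk' f hmul
  have hker : φ.ker = MulAction.stabilizer G ω := by
    ext g
    obtain ⟨a, ha⟩ := hcover g
    simp only [MonoidHom.mem_ker, MulAction.mem_stabilizer_iff]
    rw [show φ g = QuotientGroup.mk a from hf g a ha]
    rw [show (1 : A ⧸ MulAction.stabilizer A ω) = QuotientGroup.mk 1 from rfl]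
    constructor
    · intro h
      have : a • ω = ω := by
        have := (QuotientGroup.eq).mp h
        simpa [MulAction.mem_stabilizer_iff] using this
      rw [ha, this]
    · intro h
      refine (QuotientGroup.eq).mpr ?_
      have : (a⁻¹ * 1) • ω = ω := by
        have ha' : a • ω = ω := ha ▸ h
        rw [mul_one, inv_smul_eq_iff, ha']
      exact this
  refine ⟨?_, φ, hker, hf⟩
  · rw [← hker]; exact φ.normal_ker
end

section
/- Let G be a group and A an abelian group, both acting on a set Ω with commuting actions, and let ω ∈ Ω. Assume that for every g ∈ G there exists a ∈ A with g·ω = a·ω. Let m be a positive integer. Then for every tuple (x₁,…,x_m) ∈ G^m the following are equivalent: (1) there exists a ∈ A such that x_i·ω = a·ω for every i ∈ {1,…,m}; (2) there exist g ∈ G and s₁,…,s_m ∈ Stab_G(ω) such that x_i = s_i·g for every i ∈ {1,…,m}. -/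
/-- Let a group `G` and an abelian group `A` act on a set `Ω` with commuting
actions, `ω ∈ Ω`, and assume every `G`-translate of `ω` is an `A`-translate of `ω`.  For a tuple
`(x₁, …, x_m) ∈ G^m` the following are equivalent: (1) there is `a ∈ A` with `x_i • ω = a • ω`
for all `i`; (2) there are `g ∈ G` and `s₁, …, s_m ∈ Stab_G(ω)` with `x_i = s_i * g` for all
`i`. -/
theorem tuple_in_diag_orbit_iff_stab_mul_diag
    {G A Ω : Type*} [Group G] [CommGroup A] [MulAction G Ω] [MulAction A Ω]
    [SMulCommClass G A Ω] (ω : Ω)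
    (hcover : ∀ g : G, ∃ a : A, g • ω = a • ω)
    (m : ℕ) (hm : 0 < m) (x : Fin m → G) :
    (∃ a : A, ∀ i : Fin m, x i • ω = a • ω) ↔
      (∃ (g : G) (s : Fin m → G),
        (∀ i, s i ∈ MulAction.stabilizer G ω) ∧ ∀ i, x i = s i * g) := by
  constructor
  · rintro ⟨a, ha⟩
    set i0 : Fin m := ⟨0, hm⟩
    refine ⟨x i0, fun i => x i * (x i0)⁻¹, fun i => ?_, fun i => by group⟩
    have hinv : (x i0)⁻¹ • ω = a⁻¹ • ω := by
      have : a • (x i0)⁻¹ • ω = a • a⁻¹ • ω := by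
        rw [← smul_comm, ← ha i0, inv_smul_smul, smul_inv_smul]
      exact (MulAction.injective a) this
    simp only [MulAction.mem_stabilizer_iff, mul_smul, hinv]
    rw [smul_comm, ha i, inv_smul_smul]
  · rintro ⟨g, s, hs, hx⟩
    obtain ⟨a, hag⟩ := hcover g
    refine ⟨a, fun i => ?_⟩
    rw [hx i, mul_smul, hag, smul_comm, hs i]
end
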